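/- arXiv:2412.08843 — 5 statements merged into one kernel-verified Lean document; each statement's English description precedes it below -/
import Mathlib

section
/- Let f(φ) = (σ̄₁² ∨ φ)/(T φ²) + (σ̄₂² ∨ (φ + Δ̄₂))/(T (φ + Δ̄₂)²) with unique root φ* of f(φ)=1 in (1/T, 1). If 0 < δ < 1/2 and φ_δ satisfies f(φ_δ) = 1 + δ, and moreover the first summand dominates at φ*, i.e. (σ̄₁² ∨ φ*)/(T (φ*)²) ≥ 1/2, then writing φ_δ = (1 − δ̄) φ* with δ̄ ≥ 0, one has δ̄ ≤ 2δ. -/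
set_option maxHeartbeats 1000000 in
/-- Perturbation bound in the case where the first summand dominates: if `f(φ*) = 1` with
`φ* ∈ (1/T,1)`, `f(φ_δ) = 1 + δ` with `0 < δ < 1/2`, the first summand at `φ*` is at least `1/2`,
and `φ_δ = (1 - δ̄)φ*` with `δ̄ ≥ 0`, then `δ̄ ≤ 2δ`. -/
theorem perturbation_case_one (σ1 σ2 Δ T δ δbar φs φδ : ℝ)
    (hσ1 : 0 ≤ σ1) (hσ2 : 0 ≤ σ2) (hΔ : 0 ≤ Δ) (hT : 2 ≤ T)
    (f : ℝ → ℝ)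
    (hf : ∀ φ, f φ = max (σ1 ^ 2) φ / (T * φ ^ 2)
      + max (σ2 ^ 2) (φ + Δ) / (T * (φ + Δ) ^ 2))
    (hroot : f φs = 1) (hφs : φs ∈ Set.Ioo (1 / T) 1)
    (hδpos : 0 < δ) (hδlt : δ < 1 / 2)
    (hφδpos : 0 < φδ) (hφδ : f φδ = 1 + δ)
    (hdom : 1 / 2 ≤ max (σ1 ^ 2) φs / (T * φs ^ 2))
    (heq : φδ = (1 - δbar) * φs) (hδbar : 0 ≤ δbar) :
    δbar ≤ 2 * δ := by
  have hT0 : (0:ℝ) < T := by linarith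
  have hφs0 : 0 < φs := lt_trans (by positivity) hφs.1
  have h1 : 0 < 1 - δbar := by
    rcases lt_or_ge 0 (1 - δbar) with h | h
    · exact h
    · exfalso; nlinarith
  have d1 : 0 < T * φs ^ 2 := by positivity
  have d2 : 0 < T * φδ ^ 2 := by positivity
  have d3 : 0 < T * (φs + Δ) ^ 2 := by positivity
  have d4 : 0 < T * (φδ + Δ) ^ 2 := by positivity
  have hφδle : φδ ≤ φs := by nlinarith
  have hx : 0 < φδ + Δ := by linarith
  have hy : 0 < φs + Δ := by linarith
  have hxy : φδ + Δ ≤ φs + Δ := by linarith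
  -- second summand is nonincreasing
  have stepA : max (σ2^2) (φs+Δ) / (T*(φs+Δ)^2) ≤ max (σ2^2) (φδ+Δ) / (T*(φδ+Δ)^2) := by
    rw [div_le_div_iff₀ d3 d4]
    rcases le_total (σ2^2) (φδ+Δ) with h | h
    · rw [max_eq_right h, max_eq_right (by linarith)]
      nlinarith [mul_nonneg (mul_nonneg (mul_nonneg hT0.le hx.le) hy.le)
        (sub_nonneg.2 hxy)]
    · rw [max_eq_left h]
      rcases le_total (σ2^2) (φs+Δ) with h' | h'
      · rw [max_eq_right h']
        have e1 : T*(φs+Δ)*(φδ+Δ)*(φδ+Δ) ≤ T*(φs+Δ)*(φδ+Δ)*σ2^2 :=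
          mul_le_mul_of_nonneg_left h (by positivity)
        have e2 : T*(φs+Δ)*(φδ+Δ)*σ2^2 ≤ T*(φs+Δ)*(φs+Δ)*σ2^2 := by
          have h3 : 0 ≤ T*(φs+Δ)*σ2^2 := by positivity
          nlinarith [mul_le_mul_of_nonneg_left hxy h3]
        nlinarith [e1, e2]
      · rw [max_eq_left h']
        have h4 : (φδ+Δ)^2 ≤ (φs+Δ)^2 := pow_le_pow_left₀ hx.le hxy 2
        calc σ2^2 * (T*(φδ+Δ)^2) = σ2^2*T*(φδ+Δ)^2 := by ring
          _ ≤ σ2^2*T*(φs+Δ)^2 :=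
              mul_le_mul_of_nonneg_left h4 (mul_nonneg (sq_nonneg σ2) hT0.le)
          _ = σ2^2*(T*(φs+Δ)^2) := by ring
  -- first summand lower bound
  have hM1 : (1 - δbar) * max (σ1^2) φs ≤ max (σ1^2) φδ := by
    rw [heq]
    rcases le_total (σ1^2) φs with h | h
    · rw [max_eq_right h]
      exact le_max_right _ _
    · rw [max_eq_left h]
      calc (1-δbar) * σ1^2 ≤ σ1^2 := by nlinarith [sq_nonneg σ1]
        _ ≤ max (σ1^2) ((1-δbar)*φs) := le_max_left _ _
  have stepB : max (σ1^2) φs / ((1-δbar) * (T*φs^2)) ≤ max (σ1^2) φδ / (T*φδ^2) := by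
    rw [div_le_div_iff₀ (by positivity) d2]
    have hrw : T * φδ^2 = (1-δbar)^2 * (T*φs^2) := by rw [heq]; ring
    rw [hrw]
    calc max (σ1^2) φs * ((1-δbar)^2*(T*φs^2))
        = ((1-δbar) * max (σ1^2) φs) * ((1-δbar)*(T*φs^2)) := by ring
      _ ≤ max (σ1^2) φδ * ((1-δbar)*(T*φs^2)) :=
          mul_le_mul_of_nonneg_right hM1 (by positivity)
  have hroot' := hroot
  have hφδ' := hφδ
  rw [hf] at hroot' hφδ'
  set a := max (σ1^2) φs / (T*φs^2) with ha
  have hdiv : max (σ1^2) φs / ((1-δbar) * (T*φs^2)) = a / (1-δbar) := by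
    rw [ha, div_div, mul_comm]
  rw [hdiv] at stepB
  have key : a / (1-δbar) + (1 - a) ≤ 1 + δ := by
    have : a / (1-δbar) + max (σ2^2) (φs+Δ) / (T*(φs+Δ)^2) ≤ f φδ := by
      rw [hf]; exact add_le_add stepB stepA
    rw [hφδ] at this
    linarith
  have hq : a / (1-δbar) * (1-δbar) = a := div_mul_cancel₀ a (ne_of_gt h1)
  have hq0 : 0 ≤ a / (1-δbar) := by positivity
  have hq2 : 1/2 ≤ a / (1-δbar) := by nlinarith
  nlinarith [mul_le_mul_of_nonneg_right hq2 hδbar]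
end

section
/- Let μ, σ, Δ > 0 with σ > μ ≥ σ − Δ, 0 < Δ < (μ²+σ²)/μ − 2μ, and Δ ≤ σ/2. Define σ̃ ≥ 0 by ((μ+Δ)² + σ̃²)/(μ+Δ) = (μ²+σ²)/μ. Then σ̃ is well-defined (the equation has a unique nonnegative solution) and σ̃ > σ. -/
/-- Under the stated conditions the equation `((μ+Δ)² + s²)/(μ+Δ) = (μ²+σ²)/μ` has a unique
nonnegative solution `s = σ̃`, and moreover every such solution satisfies `σ̃ > σ`. -/
theorem sigma_tilde_well_defined (μ σ Δ : ℝ) (hμ : 0 < μ) (hσ : 0 < σ) (hΔ : 0 < Δ)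
    (hσμ : μ < σ) (hμσΔ : σ - Δ ≤ μ) (hΔub : Δ < (μ ^ 2 + σ ^ 2) / μ - 2 * μ)
    (hΔσ : Δ ≤ σ / 2) :
    (∃! s : ℝ, 0 ≤ s ∧ ((μ + Δ) ^ 2 + s ^ 2) / (μ + Δ) = (μ ^ 2 + σ ^ 2) / μ) ∧
    (∀ s : ℝ, 0 ≤ s → ((μ + Δ) ^ 2 + s ^ 2) / (μ + Δ) = (μ ^ 2 + σ ^ 2) / μ → σ < s) := by
  have hμΔ : 0 < μ + Δ := by linarith
  set K : ℝ := (μ + Δ) * ((μ ^ 2 + σ ^ 2) / μ) - (μ + Δ) ^ 2 with hK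
  have hΔub' : Δ * μ < σ ^ 2 - μ ^ 2 := by
    have h := (lt_div_iff₀ hμ).mp (show Δ + 2 * μ < (μ ^ 2 + σ ^ 2) / μ by linarith)
    nlinarith
  have hKσ : σ ^ 2 < K := by
    have : K = σ ^ 2 + Δ * ((σ ^ 2 - μ ^ 2) / μ - Δ) := by
      rw [hK]; field_simp; ring
    rw [this]
    have : 0 < (σ ^ 2 - μ ^ 2) / μ - Δ := by
      rw [sub_pos, lt_div_iff₀ hμ]; nlinarith
    nlinarith
  have hK0 : 0 < K := lt_trans (by positivity) hKσ
  have key : ∀ s : ℝ, ((μ + Δ) ^ 2 + s ^ 2) / (μ + Δ) = (μ ^ 2 + σ ^ 2) / μ ↔ s ^ 2 = K := by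
    intro s
    rw [div_eq_iff (ne_of_gt hμΔ)]
    constructor
    · intro h; rw [hK]; linarith
    · intro h; rw [h, hK]; ring
  have hgt : ∀ s : ℝ, 0 ≤ s → ((μ + Δ) ^ 2 + s ^ 2) / (μ + Δ) = (μ ^ 2 + σ ^ 2) / μ → σ < s := by
    intro s hs h
    have hs2 : s ^ 2 = K := (key s).mp h
    nlinarith
  refine ⟨⟨Real.sqrt K, ⟨Real.sqrt_nonneg K, ?_⟩, ?_⟩, hgt⟩
  · rw [key, Real.sq_sqrt hK0.le]
  · rintro y ⟨hy0, hy⟩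
    have hy2 : y ^ 2 = K := (key y).mp hy
    rw [← hy2, Real.sqrt_sq hy0]
end

section
/- Let μ, σ, Δ > 0 satisfy σ > μ ≥ σ − Δ and Δ ≤ σ/2, with 0 < Δ < (μ²+σ²)/μ − 2μ. Let Q = Q_{μ,σ} be the two-point distribution on {0, (μ²+σ²)/μ} with mean μ, variance σ², and let Q^Δ be its Δ-modification on the same support with mean μ+Δ (obtained by replacing (μ, σ) with (μ+Δ, σ̃) where ((μ+Δ)²+σ̃²)/(μ+Δ) = (μ²+σ²)/μ). Then the Kullback–Leibler divergence satisfies KL(Q ‖ Q^Δ) ≤ 4Δ²/σ². -/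
/-- KL divergence bound between the two-point distribution `Q_{μ,σ}` and its `Δ`-modification
`Q^Δ_{μ,σ}` (both supported on `{0, (μ²+σ²)/μ}`):
`KL(Q ‖ Q^Δ) ≤ 4Δ²/σ²`, where `σ̃² = (μ+Δ)((μ²+σ²)/μ - (μ+Δ))`. -/
theorem kl_two_point_modification_le (μ σ Δ : ℝ) (hμ : 0 < μ) (hσ : 0 < σ) (hΔ : 0 < Δ)
    (hσμ : μ < σ) (hμσΔ : σ - Δ ≤ μ) (hΔub : Δ < (μ ^ 2 + σ ^ 2) / μ - 2 * μ)
    (hΔσ : Δ ≤ σ / 2) :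
    let σt2 : ℝ := (μ + Δ) * ((μ ^ 2 + σ ^ 2) / μ - (μ + Δ))
    let q0 : ℝ := σ ^ 2 / (μ ^ 2 + σ ^ 2)
    let q1 : ℝ := μ ^ 2 / (μ ^ 2 + σ ^ 2)
    let p0 : ℝ := σt2 / ((μ + Δ) ^ 2 + σt2)
    let p1 : ℝ := (μ + Δ) ^ 2 / ((μ + Δ) ^ 2 + σt2)
    q0 * Real.log (q0 / p0) + q1 * Real.log (q1 / p1) ≤ 4 * Δ ^ 2 / σ ^ 2 := by
  intro σt2 q0 q1 p0 p1
  have hA : (0:ℝ) < μ ^ 2 + σ ^ 2 := by positivity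
  have hB : (0:ℝ) < σ ^ 2 - μ * Δ := by nlinarith
  have hC : (0:ℝ) < μ + Δ := by linarith
  have hσt2 : (0:ℝ) < σt2 := by
    have h2 : (0:ℝ) < (μ ^ 2 + σ ^ 2) / μ - (μ + Δ) := by
      have : (σ ^ 2 - μ * Δ) / μ = (μ ^ 2 + σ ^ 2) / μ - (μ + Δ) := by
        field_simp; ring
      rw [← this]; positivity
    exact mul_pos hC h2
  have hD : (0:ℝ) < (μ + Δ) ^ 2 + σt2 := by positivity
  have hq0 : (0:ℝ) < q0 := by positivity
  have hq1 : (0:ℝ) < q1 := by positivity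
  have hp0 : (0:ℝ) < p0 := by positivity
  have hp1 : (0:ℝ) < p1 := by positivity
  have hkey : (μ ^ 2 + σ ^ 2) / μ - (μ + Δ) = (σ ^ 2 - μ * Δ) / μ := by
    field_simp; ring
  have hr0 : q0 / p0 = σ ^ 2 / (σ ^ 2 - μ * Δ) := by
    show σ ^ 2 / (μ ^ 2 + σ ^ 2) /
      ((μ + Δ) * ((μ ^ 2 + σ ^ 2) / μ - (μ + Δ)) /
        ((μ + Δ) ^ 2 + (μ + Δ) * ((μ ^ 2 + σ ^ 2) / μ - (μ + Δ)))) = _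
    rw [hkey]
    rw [div_eq_div_iff]
    · field_simp; ring
    · positivity
    · exact hB.ne'
  have hr1 : q1 / p1 = μ / (μ + Δ) := by
    show μ ^ 2 / (μ ^ 2 + σ ^ 2) /
      ((μ + Δ) ^ 2 / ((μ + Δ) ^ 2 + (μ + Δ) * ((μ ^ 2 + σ ^ 2) / μ - (μ + Δ)))) = _
    rw [hkey]
    rw [div_eq_div_iff]
    · field_simp; ring
    · positivity
    · exact hC.ne'
  have hlog0 : Real.log (q0 / p0) ≤ q0 / p0 - 1 :=
    Real.log_le_sub_one_of_pos (by positivity)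
  have hlog1 : Real.log (q1 / p1) ≤ q1 / p1 - 1 :=
    Real.log_le_sub_one_of_pos (by positivity)
  have step1 : q0 * Real.log (q0 / p0) + q1 * Real.log (q1 / p1)
      ≤ q0 * (q0 / p0 - 1) + q1 * (q1 / p1 - 1) := by
    have := mul_le_mul_of_nonneg_left hlog0 hq0.le
    have := mul_le_mul_of_nonneg_left hlog1 hq1.le
    linarith
  have step2 : q0 * (q0 / p0 - 1) + q1 * (q1 / p1 - 1)
      = μ * Δ ^ 2 / ((σ ^ 2 - μ * Δ) * (μ + Δ)) := by
    rw [hr0, hr1]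
    show σ ^ 2 / (μ ^ 2 + σ ^ 2) * (σ ^ 2 / (σ ^ 2 - μ * Δ) - 1)
        + μ ^ 2 / (μ ^ 2 + σ ^ 2) * (μ / (μ + Δ) - 1) = _
    field_simp
    ring
  have step3 : μ * Δ ^ 2 / ((σ ^ 2 - μ * Δ) * (μ + Δ)) ≤ 4 * Δ ^ 2 / σ ^ 2 := by
    rw [div_le_div_iff₀ (by positivity) (by positivity)]
    have h1 : σ ^ 2 / 2 ≤ σ ^ 2 - μ * Δ := by nlinarith
    have h2 : σ ^ 2 / 2 * μ ≤ (σ ^ 2 - μ * Δ) * (μ + Δ) :=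
      mul_le_mul h1 (by linarith) hμ.le hB.le
    nlinarith [mul_le_mul_of_nonneg_left h2 (sq_nonneg Δ),
      mul_nonneg (mul_nonneg hμ.le (sq_nonneg Δ)) (sq_nonneg σ)]
  linarith
end

section
/- Let B(t) be standard Brownian motion and fix c > 1. Then for any x > 0, P( inf_{t ∈ [1/c, 1]} B(t) ≥ x ) ≥ (2Φ(x / (2√(1 − 1/c))) − 1) · (1 − Φ(3√c·x/2)), where Φ is the standard normal CDF. -/
open MeasureTheory ProbabilityTheory

namespace BMAux

lemma nnreal_neg_one_sq : (NNReal.mk ((-1:ℝ)^2) (sq_nonneg _)) = 1 := by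
  ext; norm_num

lemma gauss_symm (v : NNReal) (s : Set ℝ) (hs : MeasurableSet s) :
    gaussianReal 0 v ((fun x : ℝ => -x) ⁻¹' s) = gaussianReal 0 v s := by
  have h : (fun x : ℝ => -x) = fun x : ℝ => (-1 : ℝ) * x := by funext x; ring
  rw [h, ← Measure.map_apply (measurable_const_mul _) hs, gaussianReal_map_const_mul]
  rw [mul_zero, nnreal_neg_one_sq, one_mul]

lemma gauss_Iic_zero_ge_half (v : NNReal) : (1:ENNReal)/2 ≤ gaussianReal 0 v (Set.Iic 0) := by
  have hsymm : gaussianReal 0 v (Set.Ici (0:ℝ)) = gaussianReal 0 v (Set.Iic 0) := by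
    have := gauss_symm v (Set.Ici 0) measurableSet_Ici
    have hpre : (fun x : ℝ => -x) ⁻¹' Set.Ici 0 = Set.Iic 0 := by
      ext y; simp [neg_nonneg]
    rw [hpre] at this; exact this.symm
  have hunion : (1:ENNReal) ≤ gaussianReal 0 v (Set.Iic 0) + gaussianReal 0 v (Set.Ici 0) := by
    have : gaussianReal 0 v (Set.Iic 0 ∪ Set.Ici 0) ≤
        gaussianReal 0 v (Set.Iic 0) + gaussianReal 0 v (Set.Ici 0) := measure_union_le _ _
    have huniv : Set.Iic (0:ℝ) ∪ Set.Ici 0 = Set.univ := Set.Iic_union_Ici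
    rwa [huniv, measure_univ] at this
  rw [hsymm, ← two_mul] at hunion
  rw [ENNReal.div_le_iff_le_mul (by simp) (by simp)]
  rwa [mul_comm]

end BMAux

namespace BMAux2
open BMAux

noncomputable def stdPhi (y : ℝ) : ℝ := ((gaussianReal 0 1) (Set.Iic y)).toReal

lemma stdPhi_nonneg (y : ℝ) : 0 ≤ stdPhi y := ENNReal.toReal_nonneg

lemma stdPhi_le_one (y : ℝ) : stdPhi y ≤ 1 := by
  have := prob_le_one (μ := gaussianReal 0 1) (s := Set.Iic y)
  have h1 : ((1:ENNReal)).toReal = 1 := by simp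
  calc stdPhi y ≤ ((1:ENNReal)).toReal := ENNReal.toReal_mono (by simp) this
    _ = 1 := h1

lemma gauss_singleton (y : ℝ) : gaussianReal 0 1 ({y} : Set ℝ) = 0 :=
  (gaussianReal_absolutelyContinuous 0 one_ne_zero) (Real.volume_singleton)

lemma meas_union_singleton {α} [MeasurableSpace α] (μ : Measure α) (A : Set α) (y : α)
    (h : μ {y} = 0) : μ (A ∪ {y}) = μ A :=
  le_antisymm ((measure_union_le _ _).trans (by simp [h])) (measure_mono Set.subset_union_left)

lemma gauss_Ioi_toReal (y : ℝ) : ((gaussianReal 0 1) (Set.Ioi y)).toReal = 1 - stdPhi y := by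
  have hc : (gaussianReal 0 1) (Set.Ioi y) = 1 - (gaussianReal 0 1) (Set.Iic y) := by
    rw [← Set.compl_Iic, measure_compl measurableSet_Iic (measure_ne_top _ _), measure_univ]
  rw [hc, ENNReal.toReal_sub_of_le prob_le_one (by simp)]
  simp [stdPhi]

lemma gauss_Ici_toReal (y : ℝ) : ((gaussianReal 0 1) (Set.Ici y)).toReal = 1 - stdPhi y := by
  have h : (gaussianReal 0 1) (Set.Ici y) = (gaussianReal 0 1) (Set.Ioi y) := by
    have hu : Set.Ici y = Set.Ioi y ∪ {y} := by
      ext z; simp [le_iff_lt_or_eq, Set.mem_Ioi, eq_comm, or_comm]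
    rw [hu, meas_union_singleton _ _ _ (gauss_singleton y)]
  rw [h, gauss_Ioi_toReal]

lemma gauss_Iio_toReal (y : ℝ) : ((gaussianReal 0 1) (Set.Iio y)).toReal = stdPhi y := by
  have h : (gaussianReal 0 1) (Set.Iic y) = (gaussianReal 0 1) (Set.Iio y) := by
    have hu : Set.Iic y = Set.Iio y ∪ {y} := by
      ext z; simp [le_iff_lt_or_eq]
    rw [hu, meas_union_singleton _ _ _ (gauss_singleton y)]
  rw [stdPhi, h]

end BMAux2

namespace BMAux3
open BMAux BMAux2

lemma gauss_Iio_neg (b : ℝ) :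
    (gaussianReal 0 1) (Set.Iio (-b)) = (gaussianReal 0 1) (Set.Ioi b) := by
  have := gauss_symm 1 (Set.Iio (-b)) measurableSet_Iio
  have hpre : (fun x : ℝ => -x) ⁻¹' Set.Iio (-b) = Set.Ioi b := by
    ext z; simp [Set.mem_Iio, Set.mem_Ioi, neg_lt_neg_iff]
  rw [hpre] at this; exact this.symm

variable {Ω : Type*} [MeasurableSpace Ω] {μ : Measure Ω}

/-- standardization: if `map X μ = gaussianReal 0 v` with `v ≠ 0` then for any measurable set. -/
lemma map_std {X : Ω → ℝ} (hX : Measurable X) {v : NNReal} (hv : (0:ℝ) < v)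
    (hmap : Measure.map X μ = gaussianReal 0 v) :
    Measure.map (fun ω => (Real.sqrt v)⁻¹ * X ω) μ = gaussianReal 0 1 := by
  have hs : (0:ℝ) < Real.sqrt v := Real.sqrt_pos.mpr hv
  have h1 : (fun ω => (Real.sqrt v)⁻¹ * X ω) = ((Real.sqrt v)⁻¹ * ·) ∘ X := rfl
  rw [h1, ← Measure.map_map (measurable_const_mul _) hX, hmap, gaussianReal_map_const_mul]
  have h2 : gaussianReal ((Real.sqrt (v:ℝ))⁻¹ * 0) (NNReal.mk (((Real.sqrt (v:ℝ))⁻¹)^2) (sq_nonneg _) * v)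
      = gaussianReal 0 1 := by
    norm_num
    congr 1
    ext
    push_cast
    field_simp
  rw [h2]

lemma meas_lt_neg {X : Ω → ℝ} (hX : Measurable X) {v : NNReal} (hv : (0:ℝ) < v)
    (hmap : Measure.map X μ = gaussianReal 0 v) (b : ℝ) :
    μ {ω | X ω < -b} = (gaussianReal 0 1) (Set.Ioi (b / Real.sqrt v)) := by
  have hs : (0:ℝ) < Real.sqrt v := Real.sqrt_pos.mpr hv
  have hset : {ω | X ω < -b} = (fun ω => (Real.sqrt v)⁻¹ * X ω) ⁻¹' (Set.Iio (-(b / Real.sqrt v))) := by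
    ext ω
    simp only [Set.mem_setOf_eq, Set.mem_preimage, Set.mem_Iio]
    rw [← neg_div, div_eq_inv_mul]
    exact (mul_lt_mul_iff_right₀ (inv_pos.mpr hs)).symm
  rw [hset, ← Measure.map_apply (hX.const_mul _) measurableSet_Iio,
    map_std hX hv hmap, gauss_Iio_neg]

end BMAux3

namespace BMAux3
variable {Ω : Type*} [MeasurableSpace Ω] {μ : Measure Ω}

lemma meas_ge {X : Ω → ℝ} (hX : Measurable X) {v : NNReal} (hv : (0:ℝ) < v)
    (hmap : Measure.map X μ = gaussianReal 0 v) (r : ℝ) :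
    μ {ω | r ≤ X ω} = (gaussianReal 0 1) (Set.Ici (r / Real.sqrt v)) := by
  have hs : (0:ℝ) < Real.sqrt v := Real.sqrt_pos.mpr hv
  have hset : {ω | r ≤ X ω} = (fun ω => (Real.sqrt v)⁻¹ * X ω) ⁻¹' (Set.Ici (r / Real.sqrt v)) := by
    ext ω
    simp only [Set.mem_setOf_eq, Set.mem_preimage, Set.mem_Ici]
    rw [div_eq_inv_mul]
    exact (mul_le_mul_iff_right₀ (inv_pos.mpr hs)).symm
  rw [hset, ← Measure.map_apply (hX.const_mul _) measurableSet_Ici, map_std hX hv hmap]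

end BMAux3

namespace BMAux4

lemma sum_ite_lt (f : ℕ → ℝ) (j m : ℕ) (hjm : j ≤ m) :
    ∑ i ∈ Finset.range m, (if i < j then f i else 0) = ∑ i ∈ Finset.range j, f i := by
  induction m, hjm using Nat.le_induction with
  | base => exact Finset.sum_congr rfl (fun i hi => if_pos (Finset.mem_range.mp hi))
  | succ m hm ih => rw [Finset.sum_range_succ, if_neg (by omega), add_zero, ih]

lemma sum_ite_ge (f : ℕ → ℝ) (k m : ℕ) (hkm : k ≤ m) :
    ∑ i ∈ Finset.range m, (if k ≤ i then f i else 0)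
      = (∑ i ∈ Finset.range m, f i) - ∑ i ∈ Finset.range k, f i := by
  induction m, hkm using Nat.le_induction with
  | base =>
      rw [sub_self]
      exact Finset.sum_eq_zero (fun i hi => if_neg (by have := Finset.mem_range.mp hi; omega))
  | succ m hm ih =>
      rw [Finset.sum_range_succ, Finset.sum_range_succ (f := f), ih, if_pos (by omega)]
      ring

variable {Ω : Type*} [MeasurableSpace Ω] (μ : Measure Ω) (B : ℝ → Ω → ℝ)

lemma key_indep
    (hmeas : ∀ t, Measurable (B t))
    (hincr : ∀ (n : ℕ) (t : ℕ → ℝ), Monotone t → 0 ≤ t 0 →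
      iIndepFun
        (fun i : Fin n => fun ω => B (t (i + 1)) ω - B (t i) ω) μ)
    (t : ℕ → ℝ) (ht : Monotone t) (ht0 : 0 ≤ t 0) (k N : ℕ) (hk : k ≤ N) :
    IndepFun (fun ω (i : Fin k) => B (t ((i : ℕ) + 1)) ω - B (t (i : ℕ)) ω)
      (fun ω => B (t N) ω - B (t k) ω) μ := by
  classical
  have h := hincr N t ht ht0
  set X : Fin N → Ω → ℝ := fun i ω => B (t ((i : ℕ) + 1)) ω - B (t (i : ℕ)) ω with hX
  have hXm : ∀ i, Measurable (X i) := fun i => (hmeas _).sub (hmeas _)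
  set S : Finset (Fin N) := Finset.univ.filter (fun i => (i : ℕ) < k) with hS
  set T : Finset (Fin N) := Finset.univ.filter (fun i => k ≤ (i : ℕ)) with hT
  have hST : Disjoint S T := by
    simp only [Finset.disjoint_left, hS, hT, Finset.mem_filter, Finset.mem_univ, true_and]
    intro i hi hi2; omega
  have h2 : IndepFun (fun a (i : S) => X i a) (fun a (i : T) => X i a) μ :=
    iIndepFun.indepFun_finset S T hST h hXm
  have hφ : Measurable (fun (v : S → ℝ) (j : Fin k) =>
      v ⟨⟨(j : ℕ), lt_of_lt_of_le j.2 hk⟩, by simp [hS]⟩) :=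
    measurable_pi_lambda _ (fun j => measurable_pi_apply _)
  have hψ : Measurable (fun v : T → ℝ => ∑ i, v i) :=
    Finset.univ.measurable_sum (fun i _ => measurable_pi_apply i)
  have h3 := h2.comp hφ hψ
  have e2 : ((fun v : T → ℝ => ∑ i, v i) ∘ (fun a (i : T) => X i a))
      = fun ω => B (t N) ω - B (t k) ω := by
    funext ω
    show ∑ i : T, X i ω = _
    rw [Finset.sum_coe_sort T (fun i => X i ω), hT, Finset.sum_filter]
    rw [show (∑ i : Fin N, if k ≤ (i : ℕ) then X i ω else 0)
        = ∑ j ∈ Finset.range N, (if k ≤ j then B (t (j + 1)) ω - B (t j) ω else 0) from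
      Fin.sum_univ_eq_sum_range (fun j => if k ≤ j then B (t (j + 1)) ω - B (t j) ω else 0) N]
    rw [sum_ite_ge _ _ _ hk, Finset.sum_range_sub (f := fun j => B (t j) ω),
      Finset.sum_range_sub (f := fun j => B (t j) ω)]
    ring
  rw [e2] at h3
  exact h3

lemma key_indep2
    (hmeas : ∀ t, Measurable (B t))
    (hincr : ∀ (n : ℕ) (t : ℕ → ℝ), Monotone t → 0 ≤ t 0 →
      iIndepFun
        (fun i : Fin n => fun ω => B (t (i + 1)) ω - B (t i) ω) μ)
    (t : ℕ → ℝ) (ht : Monotone t) (ht0 : 0 ≤ t 0) (N : ℕ) :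
    IndepFun (fun ω => B (t 1) ω - B (t 0) ω)
      (fun ω (i : Fin N) => B (t ((i : ℕ) + 2)) ω - B (t ((i : ℕ) + 1)) ω) μ := by
  classical
  have h := hincr (N + 1) t ht ht0
  set X : Fin (N + 1) → Ω → ℝ := fun i ω => B (t ((i : ℕ) + 1)) ω - B (t (i : ℕ)) ω with hX
  have hXm : ∀ i, Measurable (X i) := fun i => (hmeas _).sub (hmeas _)
  set S : Finset (Fin (N + 1)) := Finset.univ.filter (fun i => (i : ℕ) < 1) with hS
  set T : Finset (Fin (N + 1)) := Finset.univ.filter (fun i => 1 ≤ (i : ℕ)) with hT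
  have hST : Disjoint S T := by
    simp only [Finset.disjoint_left, hS, hT, Finset.mem_filter, Finset.mem_univ, true_and]
    intro i hi hi2; omega
  have h2 : IndepFun (fun a (i : S) => X i a) (fun a (i : T) => X i a) μ :=
    iIndepFun.indepFun_finset S T hST h hXm
  have hφ : Measurable (fun (v : S → ℝ) => v ⟨⟨0, Nat.succ_pos N⟩, by simp [hS]⟩) :=
    measurable_pi_apply _
  have hψ : Measurable (fun (v : T → ℝ) (i : Fin N) =>
      v ⟨⟨(i : ℕ) + 1, by omega⟩, by simp [hT]⟩) :=
    measurable_pi_lambda _ (fun i => measurable_pi_apply _)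
  exact h2.comp hφ hψ

end BMAux4

namespace BMAux5
open BMAux BMAux2 BMAux3 BMAux4

variable {Ω : Type*} [MeasurableSpace Ω] (μ : Measure Ω) [IsProbabilityMeasure μ]
  (B : ℝ → Ω → ℝ)

lemma levy
    (hmeas : ∀ t, Measurable (B t))
    (hgauss : ∀ s t : ℝ, 0 ≤ s → s ≤ t →
      Measure.map (fun ω => B t ω - B s ω) μ = gaussianReal 0 (Real.toNNReal (t - s)))
    (hincr : ∀ (n : ℕ) (t : ℕ → ℝ), Monotone t → 0 ≤ t 0 →
      iIndepFun
        (fun i : Fin n => fun ω => B (t (i + 1)) ω - B (t i) ω) μ)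
    (t : ℕ → ℝ) (ht : Monotone t) (ht0 : 0 ≤ t 0) (N : ℕ) (a : ℝ) :
    μ {ω | ∃ k ≤ N, B (t k) ω - B (t 0) ω < -a}
      ≤ 2 * μ {ω | B (t N) ω - B (t 0) ω < -a} := by
  classical
  set S : ℕ → Ω → ℝ := fun k ω => B (t k) ω - B (t 0) ω with hSdef
  have hSm : ∀ k, Measurable (S k) := fun k => (hmeas _).sub (hmeas _)
  set C : ℕ → Set Ω := fun k => {ω | S k ω < -a ∧ ∀ j < k, -a ≤ S j ω} with hC
  set D : ℕ → Set Ω := fun k => {ω | B (t N) ω - B (t k) ω ≤ 0} with hD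
  have hDm : ∀ k, MeasurableSet (D k) := fun k =>
    measurableSet_le ((hmeas _).sub (hmeas _)) measurable_const
  have hCm : ∀ k, MeasurableSet (C k) := by
    intro k
    have he : C k = (S k ⁻¹' Set.Iio (-a)) ∩ ⋂ j ∈ Finset.range k, (S j ⁻¹' Set.Ici (-a)) := by
      ext ω
      simp only [hC, Set.mem_setOf_eq, Set.mem_inter_iff, Set.mem_preimage, Set.mem_Iio,
        Set.mem_Ici, Set.mem_iInter, Finset.mem_range]
    rw [he]
    exact ((hSm k) measurableSet_Iio).inter
      (MeasurableSet.biInter (Finset.range k).countable_toSet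
        (fun j _ => (hSm j) measurableSet_Ici))
  have hU : {ω | ∃ k ≤ N, S k ω < -a} ⊆ ⋃ k ∈ Finset.range (N + 1), C k := by
    intro ω hω
    obtain ⟨k, hkN, hk⟩ := hω
    have hex : ∃ j, S j ω < -a := ⟨k, hk⟩
    have hmem : Nat.find hex ∈ Finset.range (N + 1) := Finset.mem_range.mpr (by
      have := Nat.find_min' hex hk; omega)
    exact Set.mem_biUnion hmem
      ⟨Nat.find_spec hex, fun j hj => le_of_not_gt (Nat.find_min hex hj)⟩
  have hCdisj : ∀ k l, k < l → Disjoint (C k) (C l) := by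
    intro k l hkl
    rw [Set.disjoint_left]
    rintro ω ⟨hk1, _⟩ ⟨_, hl2⟩
    exact absurd hk1 (not_lt.mpr (hl2 k hkl))
  have hdisj : (↑(Finset.range (N + 1)) : Set ℕ).PairwiseDisjoint (fun k => C k ∩ D k) := by
    intro k _ l _ hkl
    rcases lt_or_gt_of_ne hkl with h | h
    · exact (hCdisj k l h).mono Set.inter_subset_left Set.inter_subset_left
    · exact ((hCdisj l k h).symm).mono Set.inter_subset_left Set.inter_subset_left
  have hsub : ∀ k, C k ∩ D k ⊆ {ω | S N ω < -a} := by
    rintro k ω ⟨hC1, h2⟩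
    simp only [hC, hD, Set.mem_setOf_eq] at hC1 h2
    obtain ⟨h1, -⟩ := hC1
    have he : S N ω = S k ω + (B (t N) ω - B (t k) ω) := by simp only [hSdef]; ring
    show S N ω < -a
    rw [he]; linarith
  have hhalf : ∀ k, k ≤ N → μ (C k) ≤ 2 * μ (C k ∩ D k) := by
    intro k hk
    have hind := key_indep μ B hmeas hincr t ht ht0 k N hk
    set V : Ω → (Fin k → ℝ) := fun ω (i : Fin k) =>
      B (t ((i : ℕ) + 1)) ω - B (t (i : ℕ)) ω with hV
    set P : ℕ → (Fin k → ℝ) → ℝ :=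
      fun j v => ∑ i : Fin k, (if (i : ℕ) < j then v i else 0) with hP
    have hPm : ∀ j, Measurable (P j) := by
      intro j
      refine Finset.univ.measurable_sum (fun i _ => ?_)
      by_cases hij : (i : ℕ) < j
      · simpa [hij] using measurable_pi_apply (X := fun _ : Fin k => ℝ) i
      · simp [hij]
    set M : Set (Fin k → ℝ) := {v | P k v < -a ∧ ∀ j < k, -a ≤ P j v} with hM
    have hMm : MeasurableSet M := by
      have he : M = (P k ⁻¹' Set.Iio (-a)) ∩ ⋂ j ∈ Finset.range k, (P j ⁻¹' Set.Ici (-a)) := by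
        ext v
        simp only [hM, Set.mem_setOf_eq, Set.mem_inter_iff, Set.mem_preimage, Set.mem_Iio,
          Set.mem_Ici, Set.mem_iInter, Finset.mem_range]
      rw [he]
      exact ((hPm k) measurableSet_Iio).inter
        (MeasurableSet.biInter (Finset.range k).countable_toSet
          (fun j _ => (hPm j) measurableSet_Ici))
    have hPV : ∀ j, j ≤ k → ∀ ω, P j (V ω) = S j ω := by
      intro j hj ω
      calc P j (V ω)
          = ∑ i ∈ Finset.range k, (if i < j then B (t (i + 1)) ω - B (t i) ω else 0) :=
            Fin.sum_univ_eq_sum_range (fun i => if i < j then B (t (i + 1)) ω - B (t i) ω else 0) k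
        _ = ∑ i ∈ Finset.range j, (B (t (i + 1)) ω - B (t i) ω) := sum_ite_lt _ _ _ hj
        _ = S j ω := by rw [Finset.sum_range_sub (f := fun i => B (t i) ω)]
    have hCpre : C k = V ⁻¹' M := by
      ext ω
      simp only [hC, hM, Set.mem_setOf_eq, Set.mem_preimage]
      constructor
      · rintro ⟨h1, h2⟩
        refine ⟨by rw [hPV k le_rfl ω]; exact h1, fun j hj => by rw [hPV j hj.le ω]; exact h2 j hj⟩
      · rintro ⟨h1, h2⟩
        rw [hPV k le_rfl ω] at h1
        exact ⟨h1, fun j hj => by rw [← hPV j hj.le ω]; exact h2 j hj⟩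
    have hDpre : D k = (fun ω => B (t N) ω - B (t k) ω) ⁻¹' (Set.Iic 0) := rfl
    have hmul : μ (C k ∩ D k) = μ (C k) * μ (D k) := by
      rw [hCpre, hDpre]
      exact hind.measure_inter_preimage_eq_mul M (Set.Iic 0) hMm measurableSet_Iic
    have hDk : (1 : ENNReal) / 2 ≤ μ (D k) := by
      have h0k : (0:ℝ) ≤ t k := le_trans ht0 (ht (Nat.zero_le k))
      have hmap := hgauss (t k) (t N) h0k (ht hk)
      have he : μ (D k) = gaussianReal 0 ((t N - t k).toNNReal) (Set.Iic 0) := by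
        rw [hDpre, ← Measure.map_apply (f := fun ω => B (t N) ω - B (t k) ω) ((hmeas _).sub (hmeas _)) measurableSet_Iic, hmap]
      rw [he]
      exact gauss_Iic_zero_ge_half _
    have h21 : (2 : ENNReal) * (1 / 2) = 1 := by
      rw [one_div, ENNReal.mul_inv_cancel (by norm_num) (by norm_num)]
    calc μ (C k) = 2 * (1 / 2) * μ (C k) := by rw [h21, one_mul]
      _ = 2 * ((1 / 2) * μ (C k)) := mul_assoc _ _ _
      _ ≤ 2 * (μ (D k) * μ (C k)) := mul_le_mul_right (mul_le_mul_left hDk _) _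
      _ = 2 * (μ (C k) * μ (D k)) := by rw [mul_comm (μ (D k))]
      _ = 2 * μ (C k ∩ D k) := by rw [hmul]
  calc μ {ω | ∃ k ≤ N, S k ω < -a}
      ≤ μ (⋃ k ∈ Finset.range (N + 1), C k) := measure_mono hU
    _ ≤ ∑ k ∈ Finset.range (N + 1), μ (C k) := measure_biUnion_finset_le _ _
    _ ≤ ∑ k ∈ Finset.range (N + 1), 2 * μ (C k ∩ D k) :=
        Finset.sum_le_sum (fun k hk => hhalf k (by
          have := Finset.mem_range.mp hk; omega))
    _ = 2 * ∑ k ∈ Finset.range (N + 1), μ (C k ∩ D k) := (Finset.mul_sum _ _ _).symm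
    _ = 2 * μ (⋃ k ∈ Finset.range (N + 1), (C k ∩ D k)) := by
        rw [measure_biUnion_finset hdisj (fun k _ => (hCm k).inter (hDm k))]
    _ ≤ 2 * μ {ω | S N ω < -a} :=
        mul_le_mul_right (measure_mono (Set.iUnion₂_subset (fun k _ => hsub k))) _

end BMAux5

namespace BMAux6
open BMAux BMAux2 BMAux3 BMAux4 BMAux5

lemma partial_sum_eq {Ω : Type*} (B : ℝ → Ω → ℝ) (u : ℕ → ℝ) (K : ℕ) (ω : Ω) (k : ℕ)
    (hk : k ≤ K) :
    ∑ i : Fin K, (if (i : ℕ) < k then B (u ((i : ℕ) + 1)) ω - B (u (i : ℕ)) ω else 0)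
      = B (u k) ω - B (u 0) ω := by
  calc ∑ i : Fin K, (if (i : ℕ) < k then B (u ((i : ℕ) + 1)) ω - B (u (i : ℕ)) ω else 0)
      = ∑ i ∈ Finset.range K, (if i < k then B (u (i + 1)) ω - B (u i) ω else 0) :=
        Fin.sum_univ_eq_sum_range (fun i => if i < k then B (u (i + 1)) ω - B (u i) ω else 0) K
    _ = ∑ i ∈ Finset.range k, (B (u (i + 1)) ω - B (u i) ω) := sum_ite_lt _ _ _ hk
    _ = B (u k) ω - B (u 0) ω := Finset.sum_range_sub (fun i => B (u i) ω) k

lemma M_measurable (K : ℕ) (a : ℝ) :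
    MeasurableSet {v : Fin K → ℝ | ∀ k ≤ K,
      a ≤ ∑ i : Fin K, (if (i : ℕ) < k then v i else 0)} := by
  have hPm : ∀ j : ℕ, Measurable (fun v : Fin K → ℝ =>
      ∑ i : Fin K, (if (i : ℕ) < j then v i else 0)) := by
    intro j
    refine Finset.univ.measurable_sum (fun i _ => ?_)
    by_cases hij : (i : ℕ) < j
    · simpa [hij] using measurable_pi_apply (X := fun _ : Fin K => ℝ) i
    · simp [hij]
  have he : {v : Fin K → ℝ | ∀ k ≤ K, a ≤ ∑ i : Fin K, (if (i : ℕ) < k then v i else 0)}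
      = ⋂ k ∈ Finset.range (K + 1),
        ((fun v : Fin K → ℝ => ∑ i : Fin K, (if (i : ℕ) < k then v i else 0)) ⁻¹' Set.Ici a) := by
    ext v
    simp only [Set.mem_setOf_eq, Set.mem_iInter, Finset.mem_range, Set.mem_preimage, Set.mem_Ici]
    constructor
    · intro h k hk; exact h k (by omega)
    · intro h k hk; exact h k (by omega)
  rw [he]
  exact MeasurableSet.biInter (Finset.range (K + 1)).countable_toSet
    (fun k _ => (hPm k) measurableSet_Ici)

variable {Ω : Type*} [MeasurableSpace Ω] (μ : Measure Ω) [IsProbabilityMeasure μ]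
  (B : ℝ → Ω → ℝ)

lemma grid_bound
    (hmeas : ∀ t, Measurable (B t))
    (hgauss : ∀ s t : ℝ, 0 ≤ s → s ≤ t →
      Measure.map (fun ω => B t ω - B s ω) μ = gaussianReal 0 (Real.toNNReal (t - s)))
    (hincr : ∀ (n : ℕ) (t : ℕ → ℝ), Monotone t → 0 ≤ t 0 →
      iIndepFun
        (fun i : Fin n => fun ω => B (t (i + 1)) ω - B (t i) ω) μ)
    (t : ℕ → ℝ) (ht : Monotone t) (ht0 : 0 ≤ t 0) (N : ℕ) (a : ℝ) (hvar : t 0 < t N) :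
    ENNReal.ofReal (2 * stdPhi (a / Real.sqrt (t N - t 0)) - 1)
      ≤ μ {ω | ∀ k ≤ N, -a ≤ B (t k) ω - B (t 0) ω} := by
  set E := {ω | ∀ k ≤ N, -a ≤ B (t k) ω - B (t 0) ω} with hE
  have hEm : MeasurableSet E := by
    have he : E = ⋂ k ∈ Finset.range (N + 1),
        ((fun ω => B (t k) ω - B (t 0) ω) ⁻¹' Set.Ici (-a)) := by
      ext ω
      simp only [hE, Set.mem_setOf_eq, Set.mem_iInter, Finset.mem_range, Set.mem_preimage,
        Set.mem_Ici]
      constructor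
      · intro h k hk; exact h k (by omega)
      · intro h k hk; exact h k (by omega)
    rw [he]
    exact MeasurableSet.biInter (Finset.range (N + 1)).countable_toSet
      (fun k _ => ((hmeas _).sub (hmeas _)) measurableSet_Ici)
  have hcompl : Eᶜ = {ω | ∃ k ≤ N, B (t k) ω - B (t 0) ω < -a} := by
    ext ω
    simp only [hE, Set.mem_compl_iff, Set.mem_setOf_eq, not_forall, not_le]
    constructor
    · rintro ⟨k, hk, h⟩; exact ⟨k, hk, h⟩
    · rintro ⟨k, hk, h⟩; exact ⟨k, hk, h⟩
  have hlevy := levy μ B hmeas hgauss hincr t ht ht0 N a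
  have hmap := hgauss (t 0) (t N) ht0 (ht (Nat.zero_le N))
  have hv : (0:ℝ) < ((t N - t 0).toNNReal : ℝ) := by
    rw [Real.coe_toNNReal _ (by linarith)]; linarith
  have htail : μ {ω | B (t N) ω - B (t 0) ω < -a}
      = gaussianReal 0 1 (Set.Ioi (a / Real.sqrt (t N - t 0))) := by
    rw [meas_lt_neg (X := fun ω => B (t N) ω - B (t 0) ω) ((hmeas _).sub (hmeas _)) hv hmap a]
    congr 3
    rw [Real.coe_toNNReal _ (by linarith)]
  have h1 : (μ Eᶜ).toReal ≤ 2 * (1 - stdPhi (a / Real.sqrt (t N - t 0))) := by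
    rw [hcompl]
    calc (μ {ω | ∃ k ≤ N, B (t k) ω - B (t 0) ω < -a}).toReal
        ≤ (2 * μ {ω | B (t N) ω - B (t 0) ω < -a}).toReal := by
          refine ENNReal.toReal_mono ?_ hlevy
          exact ENNReal.mul_ne_top (by norm_num) (measure_ne_top _ _)
      _ = 2 * (μ {ω | B (t N) ω - B (t 0) ω < -a}).toReal := by
          rw [ENNReal.toReal_mul]; norm_num
      _ = 2 * (1 - stdPhi (a / Real.sqrt (t N - t 0))) := by
          rw [htail, gauss_Ioi_toReal]
  have hsum : (μ E).toReal + (μ Eᶜ).toReal = 1 := by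
    rw [← ENNReal.toReal_add (measure_ne_top _ _) (measure_ne_top _ _),
      measure_add_measure_compl hEm, measure_univ]
    simp
  have h2 : 2 * stdPhi (a / Real.sqrt (t N - t 0)) - 1 ≤ (μ E).toReal := by linarith
  calc ENNReal.ofReal (2 * stdPhi (a / Real.sqrt (t N - t 0)) - 1)
      ≤ ENNReal.ofReal ((μ E).toReal) := ENNReal.ofReal_le_ofReal h2
    _ = μ E := ENNReal.ofReal_toReal (measure_ne_top μ E)

end BMAux6


open BMAux BMAux2 BMAux3 BMAux4 BMAux5 BMAux6

/-- Anti-concentration for standard Brownian motion: for `c > 1` and `x > 0`,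
`P(inf_{t ∈ [1/c, 1]} B(t) ≥ x) ≥ (2Φ(x/(2√(1-1/c))) - 1)(1 - Φ(3√c x/2))`,
where `Φ` is the standard normal CDF. Standard Brownian motion is encoded via
`B 0 = 0`, continuous paths, Gaussian increments `B t - B s ~ N(0, t-s)` and
independent increments. -/
theorem brownian_inf_anticoncentration {Ω : Type*} [MeasurableSpace Ω]
    (μ : Measure Ω) [IsProbabilityMeasure μ]
    (B : ℝ → Ω → ℝ)
    (hB0 : ∀ ω, B 0 ω = 0)
    (hcont : ∀ ω, Continuous fun t => B t ω)
    (hmeas : ∀ t, Measurable (B t))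
    (hgauss : ∀ s t : ℝ, 0 ≤ s → s ≤ t →
      Measure.map (fun ω => B t ω - B s ω) μ = gaussianReal 0 (Real.toNNReal (t - s)))
    (hincr : ∀ (n : ℕ) (t : ℕ → ℝ), Monotone t → 0 ≤ t 0 →
      iIndepFun
        (fun i : Fin n => fun ω => B (t (i + 1)) ω - B (t i) ω) μ)
    (c x : ℝ) (hc : 1 < c) (hx : 0 < x)
    (Φ : ℝ → ℝ) (hΦ : ∀ y, Φ y = ((gaussianReal 0 1) (Set.Iic y)).toReal) :
    ENNReal.ofReal
        ((2 * Φ (x / (2 * Real.sqrt (1 - 1 / c))) - 1) * (1 - Φ (3 * Real.sqrt c * x / 2)))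
      ≤ μ {ω | ∀ t ∈ Set.Icc (1 / c) 1, x ≤ B t ω} := by

  classical
  have hPhi : ∀ y, Φ y = stdPhi y := hΦ
  have hc0 : (0:ℝ) < c := lt_trans one_pos hc
  have hci : (0:ℝ) < 1/c := by positivity
  have hci1 : 1/c < 1 := by rw [div_lt_one hc0]; exact hc
  set s' : ℝ := 1 - 1/c with hs'
  have hs'pos : 0 < s' := by rw [hs']; linarith
  set a₀ : ℝ := x / (2 * Real.sqrt s') with ha₀
  set b₀ : ℝ := 3 * Real.sqrt c * x / 2 with hb₀
  -- grids
  set u : ℕ → ℕ → ℝ := fun n k => 1/c + ((min k (2^n) : ℕ) : ℝ) * (s' / 2^n) with hu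
  have hu0 : ∀ n, u n 0 = 1/c := fun n => by simp [hu]
  have huK : ∀ n, u n (2^n) = 1 := by
    intro n
    have h2 : ((2:ℝ))^n ≠ 0 := by positivity
    simp only [hu, min_self]
    push_cast
    field_simp
    rw [hs']
    field_simp
    ring
  have humono : ∀ n, Monotone (u n) := by
    intro n k l hkl
    have hmin : ((min k (2^n) : ℕ) : ℝ) ≤ ((min l (2^n) : ℕ) : ℝ) := by
      exact_mod_cast min_le_min hkl le_rfl
    have hδ : (0:ℝ) ≤ s'/2^n := by positivity
    simp only [hu]
    nlinarith
  have hu0' : ∀ n, (0:ℝ) ≤ u n 0 := fun n => by rw [hu0]; positivity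
  set E : ℕ → Set Ω := fun n => {ω | ∀ k ≤ 2^n, -(x/2) ≤ B (u n k) ω - B (u n 0) ω} with hE
  set A : Set Ω := {ω | 3*x/2 ≤ B (1/c) ω - B 0 ω} with hA
  -- measurability
  have hAmeas : MeasurableSet A :=
    ((hmeas _).sub (hmeas _)) measurableSet_Ici
  have hEmeas : ∀ n, MeasurableSet (E n) := by
    intro n
    have he : E n = ⋂ k ∈ Finset.range (2^n + 1),
        ((fun ω => B (u n k) ω - B (u n 0) ω) ⁻¹' Set.Ici (-(x/2))) := by
      ext ω
      simp only [hE, Set.mem_setOf_eq, Set.mem_iInter, Finset.mem_range, Set.mem_preimage,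
        Set.mem_Ici]
      constructor
      · intro h k hk; exact h k (by omega)
      · intro h k hk; exact h k (by omega)
    rw [he]
    exact MeasurableSet.biInter (Finset.range (2^n + 1)).countable_toSet
      (fun k _ => ((hmeas _).sub (hmeas _)) measurableSet_Ici)
  -- μ A
  have hmapA := hgauss 0 (1/c) le_rfl (by linarith)
  have hvA : (0:ℝ) < ((1/c - 0).toNNReal : ℝ) := by
    rw [Real.coe_toNNReal _ (by linarith)]; linarith
  have hsc : (0:ℝ) < Real.sqrt c := Real.sqrt_pos.mpr hc0
  have hmuA : μ A = ENNReal.ofReal (1 - stdPhi b₀) := by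
    have h1 := meas_ge (X := fun ω => B (1/c) ω - B 0 ω) ((hmeas (1/c)).sub (hmeas 0)) hvA hmapA (3*x/2)
    have harg : (3*x/2) / Real.sqrt ((1/c - 0).toNNReal : ℝ) = b₀ := by
      rw [Real.coe_toNNReal _ (by linarith), sub_zero, one_div, Real.sqrt_inv, hb₀]
      field_simp
    have hAeq : A = {ω | 3*x/2 ≤ B (1/c) ω - B 0 ω} := rfl
    rw [hAeq, h1, harg, ← gauss_Ici_toReal, ENNReal.ofReal_toReal (measure_ne_top _ _)]
  -- grid bound for E n
  have hEbound : ∀ n, ENNReal.ofReal (2 * stdPhi a₀ - 1) ≤ μ (E n) := by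
    intro n
    have hvar : u n 0 < u n (2^n) := by rw [hu0, huK]; linarith
    have h1 := grid_bound μ B hmeas hgauss hincr (u n) (humono n) (hu0' n) (2^n) (x/2) hvar
    have harg : (x/2) / Real.sqrt (u n (2^n) - u n 0) = a₀ := by
      rw [huK, hu0, ha₀, show (1:ℝ) - 1/c = s' from hs'.symm, div_div]
    rw [harg] at h1
    exact h1
  -- independence A , E n
  have hAE : ∀ n, μ (A ∩ E n) = μ A * μ (E n) := by
    intro n
    set r : ℕ → ℝ := fun j => if j = 0 then 0 else u n (j-1) with hr
    have hupos : ∀ m, (0:ℝ) ≤ u n m := by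
      intro m
      have : (0:ℝ) ≤ ((min m (2^n) : ℕ) : ℝ) * (s'/2^n) := by positivity
      simp only [hu]; linarith
    have hrmono : Monotone r := by
      intro j l hjl
      rcases Nat.eq_zero_or_pos j with hj | hj
      · subst hj
        rcases Nat.eq_zero_or_pos l with hl | hl
        · subst hl; exact le_rfl
        · simp only [hr, if_pos rfl, if_neg (by omega : l ≠ 0)]
          exact hupos _
      · have hj' : j ≠ 0 := by omega
        have hl' : l ≠ 0 := by omega
        simp only [hr, if_neg hj', if_neg hl']
        exact humono n (by omega)
    have hr0' : (0:ℝ) ≤ r 0 := le_of_eq (by simp [hr])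
    have hrs : ∀ m, r (m+1) = u n m := fun m => by simp [hr]
    have hind := key_indep2 μ B hmeas hincr r hrmono hr0' (2^n)
    have hfX : (fun ω => B (r 1) ω - B (r 0) ω) = (fun ω => B (1/c) ω - B 0 ω) := by
      funext ω
      rw [show r 1 = u n 0 from hrs 0, hu0, show r 0 = 0 from by simp [hr]]
    have hfV : (fun ω (i : Fin (2^n)) => B (r ((i:ℕ) + 2)) ω - B (r ((i:ℕ) + 1)) ω)
        = (fun ω (i : Fin (2^n)) => B (u n ((i:ℕ)+1)) ω - B (u n (i:ℕ)) ω) := by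
      funext ω i
      rw [show (i:ℕ) + 2 = ((i:ℕ) + 1) + 1 from rfl, hrs, hrs]
    rw [hfX, hfV] at hind
    have hApre : A = (fun ω => B (1/c) ω - B 0 ω) ⁻¹' Set.Ici (3*x/2) := rfl
    have hEpre : E n = (fun ω (i : Fin (2^n)) => B (u n ((i:ℕ)+1)) ω - B (u n (i:ℕ)) ω) ⁻¹'
        {v : Fin (2^n) → ℝ | ∀ k ≤ 2^n, -(x/2) ≤ ∑ i : Fin (2^n), (if (i:ℕ) < k then v i else 0)} := by
      ext ω
      simp only [hE, Set.mem_setOf_eq, Set.mem_preimage]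
      constructor
      · intro h k hk; rw [partial_sum_eq B (u n) (2^n) ω k hk]; exact h k hk
      · intro h k hk; have h2 := h k hk; rwa [partial_sum_eq B (u n) (2^n) ω k hk] at h2
    rw [hApre, hEpre]
    exact hind.measure_inter_preimage_eq_mul _ _ measurableSet_Ici (M_measurable (2^n) (-(x/2)))
  -- monotonicity of E
  have hmonoE : ∀ n, E (n+1) ⊆ E n := by
    intro n ω hω k hk
    have hpow : 2^(n+1) = 2 * 2^n := by ring
    have h2k : 2*k ≤ 2^(n+1) := by omega
    have h1 := hω (2*k) h2k
    have hgrid : u (n+1) (2*k) = u n k := by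
      simp only [hu]
      rw [min_eq_left h2k, min_eq_left hk]
      push_cast
      have h2 : ((2:ℝ))^(n+1) = 2 * 2^n := by ring
      rw [h2]
      field_simp
    have hgrid0 : u (n+1) 0 = u n 0 := by rw [hu0, hu0]
    rwa [hgrid, hgrid0] at h1
  have hAnti : Antitone (fun n => A ∩ E n) :=
    antitone_nat_of_succ_le (fun n => Set.inter_subset_inter subset_rfl (hmonoE n))
  have htend := tendsto_measure_iInter_atTop (μ := μ) (s := fun n => A ∩ E n)
    (fun n => (hAmeas.inter (hEmeas n)).nullMeasurableSet) hAnti ⟨0, measure_ne_top _ _⟩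
  -- lower bound for each n
  have hlow : ∀ n, ENNReal.ofReal (1 - stdPhi b₀) * ENNReal.ofReal (2 * stdPhi a₀ - 1)
      ≤ μ (A ∩ E n) := by
    intro n
    rw [hAE n, hmuA]
    exact mul_le_mul' le_rfl (hEbound n)
  have hiInter : ENNReal.ofReal (1 - stdPhi b₀) * ENNReal.ofReal (2 * stdPhi a₀ - 1)
      ≤ μ (⋂ n, A ∩ E n) := ge_of_tendsto' htend hlow
  -- inclusion in target
  have hincl : (⋂ n, A ∩ E n) ⊆ {ω | ∀ t ∈ Set.Icc (1/c) 1, x ≤ B t ω} := by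
    intro ω hω
    intro tt htt
    have hAω : 3*x/2 ≤ B (1/c) ω := by
      have h1 := (Set.mem_iInter.mp hω 0).1
      have h2 : 3*x/2 ≤ B (1/c) ω - B 0 ω := h1
      rwa [hB0 ω, sub_zero] at h2
    have hEω : ∀ n, ∀ k ≤ 2^n, -(x/2) ≤ B (u n k) ω - B (1/c) ω := by
      intro n k hk
      have h1 := (Set.mem_iInter.mp hω n).2 k hk
      rwa [hu0] at h1
    obtain ⟨htt1, htt2⟩ := htt
    set τ : ℝ := tt - 1/c with hτ
    have hτ0 : 0 ≤ τ := by rw [hτ]; linarith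
    have hτs : τ ≤ s' := by rw [hτ, hs']; linarith
    have hkn : ∀ n, ⌊τ * 2^n / s'⌋₊ ≤ 2^n := by
      intro n
      have hp : (0:ℝ) < (2:ℝ)^n := by positivity
      have h1 : τ * 2^n / s' ≤ (2:ℝ)^n := by
        rw [div_le_iff₀ hs'pos]
        nlinarith
      calc ⌊τ * 2^n / s'⌋₊ ≤ ⌊((2^n : ℕ) : ℝ)⌋₊ := Nat.floor_mono (by push_cast; exact h1)
        _ = 2^n := Nat.floor_natCast _
    set q : ℕ → ℝ := fun n => 1/c + (⌊τ * 2^n / s'⌋₊ : ℝ) * (s'/2^n) with hq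
    have hqmem : ∀ n, -(x/2) ≤ B (q n) ω - B (1/c) ω := by
      intro n
      have hqval : q n = u n ⌊τ * 2^n / s'⌋₊ := by
        simp only [hq, hu]
        rw [min_eq_left (hkn n)]
      rw [hqval]
      exact hEω n _ (hkn n)
    have hqle : ∀ n, q n ≤ tt := by
      intro n
      have hp : (0:ℝ) < (2:ℝ)^n := by positivity
      have hfl := Nat.floor_le (show (0:ℝ) ≤ τ * 2^n / s' by positivity)
      have h2 : (⌊τ * 2^n / s'⌋₊ : ℝ) * (s'/2^n) ≤ τ := by
        calc (⌊τ * 2^n / s'⌋₊ : ℝ) * (s'/2^n) ≤ (τ * 2^n / s') * (s'/2^n) := by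
              exact mul_le_mul_of_nonneg_right hfl (by positivity)
          _ = τ := by field_simp
      simp only [hq]
      rw [hτ] at h2
      linarith
    have hqge : ∀ n, tt - s'/2^n ≤ q n := by
      intro n
      have hp : (0:ℝ) < (2:ℝ)^n := by positivity
      have hfl := (Nat.lt_floor_add_one (τ * 2^n / s')).le
      have h2 : τ ≤ ((⌊τ * 2^n / s'⌋₊ : ℝ) + 1) * (s'/2^n) := by
        calc τ = (τ * 2^n / s') * (s'/2^n) := by field_simp
          _ ≤ ((⌊τ * 2^n / s'⌋₊ : ℝ) + 1) * (s'/2^n) := by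
              exact mul_le_mul_of_nonneg_right hfl (by positivity)
      simp only [hq]
      rw [hτ] at h2
      have h3 : ((⌊τ * 2^n / s'⌋₊ : ℝ) + 1) * (s'/2^n)
          = (⌊τ * 2^n / s'⌋₊ : ℝ) * (s'/2^n) + s'/2^n := by ring
      rw [h3] at h2
      linarith
    have hδtend : Filter.Tendsto (fun n : ℕ => s'/2^n) Filter.atTop (nhds 0) := by
      have h1 : (fun n : ℕ => s'/2^n) = fun n : ℕ => s' * (1/2:ℝ)^n := by
        funext n; rw [div_pow, one_pow]; ring
      rw [h1]
      have h2 := tendsto_pow_atTop_nhds_zero_of_lt_one (by norm_num : (0:ℝ) ≤ 1/2)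
        (by norm_num : (1/2:ℝ) < 1)
      simpa using h2.const_mul s'
    have htq : Filter.Tendsto q Filter.atTop (nhds tt) := by
      have hlo : Filter.Tendsto (fun n : ℕ => tt - s'/2^n) Filter.atTop (nhds tt) := by
        simpa using (tendsto_const_nhds (x := tt)).sub hδtend
      exact tendsto_of_tendsto_of_tendsto_of_le_of_le hlo tendsto_const_nhds hqge hqle
    have hlim : Filter.Tendsto (fun n => B (q n) ω - B (1/c) ω) Filter.atTop
        (nhds (B tt ω - B (1/c) ω)) := by
      exact (((hcont ω).tendsto tt).comp htq).sub_const _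
    have hineq : -(x/2) ≤ B tt ω - B (1/c) ω := ge_of_tendsto' hlim hqmem
    show x ≤ B tt ω
    linarith
  -- final
  rw [hPhi, hPhi]
  rcases le_or_gt (2 * stdPhi a₀ - 1) 0 with hcase | hcase
  · rw [ENNReal.ofReal_eq_zero.mpr
      (mul_nonpos_of_nonpos_of_nonneg hcase (by linarith [stdPhi_le_one b₀]))]
    exact zero_le
  · rw [ENNReal.ofReal_mul hcase.le, mul_comm]
    exact le_trans hiInter (measure_mono hincl)
end

section
/- For Gaussian two-armed bandit instances ν₁ = (N(Δ, σ₁²), N(0, σ₂²)) and ν₂ = (N(Δ, σ₁²), N(2Δ, σ₂²)) with σ₂ ≥ σ₁ > 0 and Δ = σ₂/√(2T), any policy π over horizon T satisfies E_{π ν₁} Reg(T) + E_{π ν₂} Reg(T) ≥ σ₂√T/(4√2·e), and hence max(E_{π ν₁} Reg(T), E_{π ν₂} Reg(T)) ≥ σ_sub(ν) √T /(8√2 e) for one of the two instances ν, where σ_sub(ν) denotes the standard deviation of the suboptimal arm under ν. -/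
open MeasureTheory ProbabilityTheory

/-- The law of the trajectory `((a_1, X_1), …, (a_n, X_n))` of a (possibly randomized)
bandit policy `π` interacting with arm reward distributions `ν : Fin 2 → Measure ℝ`. -/
noncomputable def trajectory (π : (n : ℕ) → (Fin n → Fin 2 × ℝ) → Measure (Fin 2))
    (ν : Fin 2 → Measure ℝ) : (n : ℕ) → Measure (Fin n → Fin 2 × ℝ)
  | 0 => Measure.dirac (fun i => i.elim0)
  | n + 1 => (trajectory π ν n).bind (fun h =>
      (π n h).bind (fun a => (ν a).map (fun x => Fin.snoc h (a, x))))

/-- The (pseudo-)regret of a trajectory for arm means `m`. -/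
noncomputable def regret (m : Fin 2 → ℝ) (T : ℕ) (h : Fin T → Fin 2 × ℝ) : ℝ :=
  ∑ t : Fin T, (max (m 0) (m 1) - m (h t).1)


open scoped ENNReal NNReal

namespace BanditAux

variable {n : ℕ}

/-- Abbreviation for appending a step to a history. -/
def sn (h : Fin n → Fin 2 × ℝ) (p : Fin 2 × ℝ) : Fin (n+1) → Fin 2 × ℝ := Fin.snoc h p

@[simp] lemma sn_castSucc (h : Fin n → Fin 2 × ℝ) (p : Fin 2 × ℝ) (j : Fin n) :
    sn h p j.castSucc = h j := by simp [sn]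

@[simp] lemma sn_last (h : Fin n → Fin 2 × ℝ) (p : Fin 2 × ℝ) :
    sn h p (Fin.last n) = p := by simp [sn]

lemma measurable_sn2 (a : Fin 2) :
    Measurable (fun p : (Fin n → Fin 2 × ℝ) × ℝ => sn p.1 (a, p.2)) := by
  apply measurable_pi_lambda
  intro i
  refine Fin.lastCases ?_ ?_ i
  · simpa using
      (measurable_const.prodMk measurable_snd :
        Measurable fun p : (Fin n → Fin 2 × ℝ) × ℝ => (a, p.2))
  · intro j
    simpa [Function.comp_def] using (measurable_pi_apply j).comp
      (measurable_fst : Measurable fun p : (Fin n → Fin 2 × ℝ) × ℝ => p.1)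

lemma measurable_sn (h : Fin n → Fin 2 × ℝ) (a : Fin 2) :
    Measurable (fun x : ℝ => sn h (a, x)) :=
  (measurable_sn2 a).comp (measurable_const.prodMk measurable_id)

variable (π : (n : ℕ) → (Fin n → Fin 2 × ℝ) → Measure (Fin 2))
  (ν : Fin 2 → Measure ℝ)

lemma measurable_step (hπm : ∀ n, Measurable (π n)) [∀ a, SFinite (ν a)] (n : ℕ) :
    Measurable (fun h : Fin n → Fin 2 × ℝ =>
      (π n h).bind (fun a => (ν a).map (fun x => sn h (a, x)))) := by
  apply Measure.measurable_of_measurable_coe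
  intro s hs
  have h1 : ∀ h : Fin n → Fin 2 × ℝ,
      ((π n h).bind fun a => (ν a).map fun x => sn h (a, x)) s
        = ∑ a : Fin 2, ((ν a).map fun x => sn h (a, x)) s * (π n h) {a} := by
    intro h
    rw [Measure.bind_apply hs (measurable_of_countable _).aemeasurable, lintegral_fintype]
  simp_rw [h1]
  apply Finset.measurable_sum
  intro a _
  apply Measurable.mul
  · have h2 : ∀ h : Fin n → Fin 2 × ℝ,
        ((ν a).map fun x => sn h (a, x)) s
          = ∫⁻ x, s.indicator (fun _ => 1) (sn h (a, x)) ∂(ν a) := by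
      intro h
      rw [Measure.map_apply (measurable_sn h a) hs,
        ← lintegral_indicator_one (hs.preimage (measurable_sn h a))]
      congr 1 with x
    simp_rw [h2]
    exact Measurable.lintegral_prod_right
      ((measurable_one.indicator hs).comp (measurable_sn2 a))
  · exact (Measure.measurable_coe (measurableSet_singleton a)).comp (hπm n)

lemma traj_succ :
    trajectory π ν (n+1) = (trajectory π ν n).bind (fun h =>
      (π n h).bind (fun a => (ν a).map (fun x => sn h (a, x)))) := rfl

lemma lintegral_traj_succ (hπm : ∀ n, Measurable (π n)) [∀ a, SFinite (ν a)] (n : ℕ)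
    {f : (Fin (n+1) → Fin 2 × ℝ) → ℝ≥0∞} (hf : Measurable f) :
    ∫⁻ h, f h ∂(trajectory π ν (n+1))
      = ∫⁻ h, ∫⁻ a, ∫⁻ x, f (sn h (a, x)) ∂(ν a) ∂(π n h) ∂(trajectory π ν n) := by
  rw [traj_succ, Measure.lintegral_bind (measurable_step π ν hπm n).aemeasurable hf.aemeasurable]
  congr 1
  ext h
  rw [Measure.lintegral_bind (measurable_of_countable _).aemeasurable hf.aemeasurable]
  congr 1
  ext a
  rw [lintegral_map hf (measurable_sn h a)]

lemma traj_prob (hπm : ∀ n, Measurable (π n)) (hπp : ∀ n h, IsProbabilityMeasure (π n h))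
    [∀ a, IsProbabilityMeasure (ν a)] :
    ∀ n, IsProbabilityMeasure (trajectory π ν n) := by
  intro n
  induction n with
  | zero =>
    rw [show trajectory π ν 0 = Measure.dirac (fun i => i.elim0) from rfl]
    infer_instance
  | succ n ih =>
    constructor
    rw [← lintegral_one, lintegral_traj_succ π ν hπm n (f := fun _ => 1) measurable_one]
    have h1 : ∀ (h : Fin n → Fin 2 × ℝ),
        (∫⁻ a, ∫⁻ _x, (1:ℝ≥0∞) ∂(ν a) ∂(π n h)) = 1 := by
      intro h
      haveI := hπp n h
      simp
    simp_rw [h1, lintegral_one, measure_univ]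

end BanditAux

namespace BanditAux

open Real in
lemma gaussian_pdf_ratio {σ Δ : ℝ} (hσ : 0 < σ) :
    gaussianReal (2*Δ) (Real.toNNReal (σ^2))
      = (gaussianReal 0 (Real.toNNReal (σ^2))).withDensity
          (fun x => ENNReal.ofReal (Real.exp ((2*Δ*x - 2*Δ^2)/σ^2))) := by
  have hσ2 : (0:ℝ) < σ^2 := by positivity
  have hv : Real.toNNReal (σ^2) ≠ 0 := by
    simp only [ne_eq, Real.toNNReal_eq_zero, not_le]; exact hσ2
  have hvv : ((Real.toNNReal (σ^2) : ℝ≥0) : ℝ) = σ^2 := Real.coe_toNNReal _ hσ2.le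
  rw [gaussianReal_of_var_ne_zero _ hv, gaussianReal_of_var_ne_zero _ hv,
    ← withDensity_mul _ (measurable_gaussianPDF _ _)
      (by exact (Real.measurable_exp.comp (by fun_prop)).ennreal_ofReal)]
  congr 1
  funext x
  simp only [Pi.mul_apply, gaussianPDF]
  rw [← ENNReal.ofReal_mul (gaussianPDFReal_nonneg _ _ _)]
  congr 1
  simp only [gaussianPDFReal, hvv, sub_zero]
  have hexp : (-(x - 2*Δ)^2/(2*σ^2) : ℝ)
      = -x^2/(2*σ^2) + (2*Δ*x - 2*Δ^2)/σ^2 := by field_simp; ring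
  rw [hexp, Real.exp_add]
  ring

open Real in
lemma gaussian_half_exp {σ Δ : ℝ} (hσ : 0 < σ) :
    ∫⁻ x, ENNReal.ofReal (Real.exp ((2*Δ*x - 2*Δ^2)/(2*σ^2)))
        ∂(gaussianReal 0 (Real.toNNReal (σ^2)))
      = ENNReal.ofReal (Real.exp (-Δ^2/(2*σ^2))) := by
  have hσ2 : (0:ℝ) < σ^2 := by positivity
  have hv : Real.toNNReal (σ^2) ≠ 0 := by
    simp only [ne_eq, Real.toNNReal_eq_zero, not_le]; exact hσ2
  have hvv : ((Real.toNNReal (σ^2) : ℝ≥0) : ℝ) = σ^2 := Real.coe_toNNReal _ hσ2.le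
  rw [gaussianReal_of_var_ne_zero _ hv,
    lintegral_withDensity_eq_lintegral_mul _ (measurable_gaussianPDF _ _)
      (by exact (Real.measurable_exp.comp (by fun_prop)).ennreal_ofReal)]
  have key : ∀ x : ℝ, (gaussianPDF 0 (Real.toNNReal (σ^2))
        * fun x => ENNReal.ofReal (Real.exp ((2*Δ*x - 2*Δ^2)/(2*σ^2)))) x
      = ENNReal.ofReal (Real.exp (-Δ^2/(2*σ^2)))
        * ENNReal.ofReal (gaussianPDFReal Δ (Real.toNNReal (σ^2)) x) := by
    intro x
    simp only [Pi.mul_apply, gaussianPDF]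
    rw [← ENNReal.ofReal_mul (gaussianPDFReal_nonneg _ _ _),
      ← ENNReal.ofReal_mul (Real.exp_nonneg _)]
    congr 1
    simp only [gaussianPDFReal, hvv, sub_zero]
    have hexp : (-x^2/(2*σ^2) + (2*Δ*x - 2*Δ^2)/(2*σ^2) : ℝ)
        = -Δ^2/(2*σ^2) + -(x - Δ)^2/(2*σ^2) := by field_simp; ring
    rw [mul_assoc (Real.sqrt (2 * Real.pi * σ^2))⁻¹, ← Real.exp_add, hexp, Real.exp_add]
    ring
  simp_rw [key]
  rw [lintegral_const_mul _ (measurable_gaussianPDFReal _ _).ennreal_ofReal,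
    lintegral_gaussianPDFReal_eq_one _ hv, mul_one]

lemma prod_sn (w : Fin 2 × ℝ → ℝ≥0∞) (h : Fin n → Fin 2 × ℝ) (p : Fin 2 × ℝ) :
    ∏ t : Fin (n+1), w (sn h p t) = (∏ t : Fin n, w (h t)) * w p := by
  rw [Fin.prod_univ_castSucc]
  simp

lemma measurable_prodW (w : Fin 2 × ℝ → ℝ≥0∞) (hw : Measurable w) :
    Measurable (fun h : Fin n → Fin 2 × ℝ => ∏ t, w (h t)) :=
  Finset.measurable_prod _ (fun t _ => hw.comp (measurable_pi_apply t))

variable (π : (n : ℕ) → (Fin n → Fin 2 × ℝ) → Measure (Fin 2))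
  (ν : Fin 2 → Measure ℝ)

lemma measurable_double_lint (hπm : ∀ n, Measurable (π n)) [∀ a, SFinite (ν a)] (n : ℕ)
    {F : (Fin n → Fin 2 × ℝ) → Fin 2 → ℝ → ℝ≥0∞}
    (hF : ∀ a, Measurable (fun p : (Fin n → Fin 2 × ℝ) × ℝ => F p.1 a p.2)) :
    Measurable fun h => ∫⁻ a, ∫⁻ x, F h a x ∂(ν a) ∂(π n h) := by
  have h1 : ∀ h, (∫⁻ a, ∫⁻ x, F h a x ∂(ν a) ∂(π n h))
      = ∑ a : Fin 2, (∫⁻ x, F h a x ∂(ν a)) * (π n h) {a} := by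
    intro h
    rw [lintegral_fintype]
  simp_rw [h1]
  refine Finset.measurable_sum _ fun a _ => Measurable.mul ?_
    ((Measure.measurable_coe (measurableSet_singleton a)).comp (hπm n))
  exact Measurable.lintegral_prod_right' (hF a)

end BanditAux

namespace BanditAux

variable (π : (n : ℕ) → (Fin n → Fin 2 × ℝ) → Measure (Fin 2))
  (ν ν' : Fin 2 → Measure ℝ)

lemma likelihood (hπm : ∀ n, Measurable (π n)) [∀ a, SFinite (ν a)] [∀ a, SFinite (ν' a)]
    {g : Fin 2 × ℝ → ℝ≥0∞} (hg : Measurable g) (hg0 : ∀ x : ℝ, g (0, x) = 1)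
    (hν'0 : ν' 0 = ν 0) (hν'1 : ν' 1 = (ν 1).withDensity (fun x => g (1, x))) :
    ∀ n, ∀ f : (Fin n → Fin 2 × ℝ) → ℝ≥0∞, Measurable f →
      ∫⁻ h, f h ∂(trajectory π ν' n)
        = ∫⁻ h, (∏ t, g (h t)) * f h ∂(trajectory π ν n) := by
  intro n
  induction n with
  | zero =>
    intro f hf
    rw [show trajectory π ν' 0 = Measure.dirac (fun i => i.elim0) from rfl,
      show trajectory π ν 0 = Measure.dirac (fun i => i.elim0) from rfl,
      lintegral_dirac' _ hf, lintegral_dirac' _ (f := fun h => (∏ t, g (h t)) * f h) ((measurable_prodW g hg).mul hf)]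
    simp
  | succ n ih =>
    intro f hf
    rw [lintegral_traj_succ π ν' hπm n hf]
    have inner_eq : ∀ (h : Fin n → Fin 2 × ℝ) (a : Fin 2),
        (∫⁻ x, f (sn h (a, x)) ∂(ν' a))
          = ∫⁻ x, g (a, x) * f (sn h (a, x)) ∂(ν a) := by
      intro h a
      have e0 : (∫⁻ x, f (sn h ((0 : Fin 2), x)) ∂(ν' 0))
          = ∫⁻ x, g ((0 : Fin 2), x) * f (sn h ((0 : Fin 2), x)) ∂(ν 0) := by
        rw [hν'0]
        simp_rw [hg0, one_mul]
      have e1 : (∫⁻ x, f (sn h ((1 : Fin 2), x)) ∂(ν' 1))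
          = ∫⁻ x, g ((1 : Fin 2), x) * f (sn h ((1 : Fin 2), x)) ∂(ν 1) := by
        rw [hν'1, lintegral_withDensity_eq_lintegral_mul _
            (show Measurable fun x : ℝ => g ((1 : Fin 2), x) from
              hg.comp (measurable_const.prodMk measurable_id))
            (show Measurable fun x : ℝ => f (sn h ((1 : Fin 2), x)) from
              hf.comp (measurable_sn h 1))]
        rfl
      fin_cases a
      · exact e0
      · exact e1
    simp_rw [inner_eq]
    rw [ih _ (measurable_double_lint π ν hπm n (fun a =>
      (hg.comp ((measurable_const (a := a)).prodMk measurable_snd)).mul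
        (hf.comp (measurable_sn2 a))))]
    rw [lintegral_traj_succ π ν hπm n (f := fun h => (∏ t, g (h t)) * f h) ((measurable_prodW g hg).mul hf)]
    congr 1
    ext h
    have pull : ∀ a : Fin 2, ∫⁻ x, (∏ t, g (h t)) * (g (a, x) * f (sn h (a, x))) ∂(ν a)
        = (∏ t, g (h t)) * ∫⁻ x, g (a, x) * f (sn h (a, x)) ∂(ν a) := by
      intro a
      rw [lintegral_const_mul _ (show Measurable fun x : ℝ => g (a, x) * f (sn h (a, x)) from
        (hg.comp (measurable_const.prodMk measurable_id)).mul (hf.comp (measurable_sn h a)))]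
    calc (∏ t, g (h t)) * ∫⁻ a, ∫⁻ x, g (a, x) * f (sn h (a, x)) ∂(ν a) ∂(π n h)
        = ∫⁻ a, ∫⁻ x, (∏ t, g (h t)) * (g (a, x) * f (sn h (a, x))) ∂(ν a) ∂(π n h) := by
          simp_rw [pull]
          rw [lintegral_const_mul _ (measurable_of_countable _)]
      _ = ∫⁻ a, ∫⁻ x, (∏ t, g (sn h (a, x) t)) * f (sn h (a, x)) ∂(ν a) ∂(π n h) := by
          congr 1; ext a; congr 1; ext x
          rw [prod_sn, mul_assoc]

lemma hellinger_lb (hπm : ∀ n, Measurable (π n)) (hπp : ∀ n h, IsProbabilityMeasure (π n h))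
    [∀ a, IsProbabilityMeasure (ν a)]
    {w : Fin 2 × ℝ → ℝ≥0∞} (hw : Measurable w) {c : ℝ≥0∞} (hc1 : c ≤ 1)
    (hw0 : ∀ x : ℝ, w (0, x) = 1) (hwint : ∫⁻ x, w (1, x) ∂(ν 1) = c) :
    ∀ n, c ^ n ≤ ∫⁻ h, ∏ t, w (h t) ∂(trajectory π ν n) := by
  intro n
  induction n with
  | zero =>
    rw [show trajectory π ν 0 = Measure.dirac (fun i => i.elim0) from rfl,
      lintegral_dirac' _ (measurable_prodW w hw)]
    simp
  | succ n ih =>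
    rw [lintegral_traj_succ π ν hπm n (measurable_prodW w hw)]
    simp_rw [prod_sn]
    have pull : ∀ (h : Fin n → Fin 2 × ℝ) (a : Fin 2),
        ∫⁻ x, (∏ t, w (h t)) * w (a, x) ∂(ν a)
          = (∏ t, w (h t)) * ∫⁻ x, w (a, x) ∂(ν a) := by
      intro h a
      rw [lintegral_const_mul _ (show Measurable fun x : ℝ => w (a, x) from
        hw.comp (measurable_const.prodMk measurable_id))]
    simp_rw [pull]
    have step : ∀ h : Fin n → Fin 2 × ℝ,
        ∫⁻ a, (∏ t, w (h t)) * ∫⁻ x, w (a, x) ∂(ν a) ∂(π n h)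
          = (∏ t, w (h t)) * ∫⁻ a, ∫⁻ x, w (a, x) ∂(ν a) ∂(π n h) := by
      intro h
      rw [lintegral_const_mul _ (measurable_of_countable _)]
    simp_rw [step]
    have hbound : ∀ h : Fin n → Fin 2 × ℝ,
        c ≤ ∫⁻ a, ∫⁻ x, w (a, x) ∂(ν a) ∂(π n h) := by
      intro h
      haveI := hπp n h
      rw [lintegral_fintype, Fin.sum_univ_two]
      have h0 : ∫⁻ x, w (0, x) ∂(ν 0) = 1 := by simp_rw [hw0]; simp
      rw [h0, hwint, one_mul]
      have huniv : (π n h) {0} + (π n h) {1} = 1 := by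
        have := measure_univ (μ := π n h)
        rw [← this, ← lintegral_one, lintegral_fintype, Fin.sum_univ_two, one_mul, one_mul]
      calc c = c * ((π n h) {0} + (π n h) {1}) := by rw [huniv, mul_one]
        _ = c * (π n h) {0} + c * (π n h) {1} := by rw [mul_add]
        _ ≤ (π n h) {0} + c * (π n h) {1} := by
            gcongr
            exact mul_le_of_le_one_left (zero_le) hc1
    calc c ^ (n+1) = c ^ n * c := by rw [pow_succ]
      _ ≤ (∫⁻ h, ∏ t, w (h t) ∂(trajectory π ν n)) * c := by
          exact mul_le_mul_left ih c
      _ = ∫⁻ h, (∏ t, w (h t)) * c ∂(trajectory π ν n) := by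
          rw [lintegral_mul_const _ (measurable_prodW w hw)]
      _ ≤ _ := lintegral_mono fun h => mul_le_mul_right (hbound h) _

end BanditAux


namespace BanditAux

/-- Likelihood-ratio density of `N(2Δ,σ²)` w.r.t. `N(0,σ²)` attached to arm 1. -/
noncomputable def gden (Δ σ : ℝ) : Fin 2 × ℝ → ℝ≥0∞ := fun p =>
  if p.1 = 0 then 1 else ENNReal.ofReal (Real.exp ((2*Δ*p.2 - 2*Δ^2)/σ^2))

/-- Pointwise square root of `gden`. -/
noncomputable def wden (Δ σ : ℝ) : Fin 2 × ℝ → ℝ≥0∞ := fun p =>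
  if p.1 = 0 then 1 else ENNReal.ofReal (Real.exp ((2*Δ*p.2 - 2*Δ^2)/(2*σ^2)))

variable {Δ σ : ℝ}

@[simp] lemma gden_zero (x : ℝ) : gden Δ σ (0, x) = 1 := if_pos rfl
@[simp] lemma wden_zero (x : ℝ) : wden Δ σ (0, x) = 1 := if_pos rfl
@[simp] lemma gden_one (x : ℝ) :
    gden Δ σ (1, x) = ENNReal.ofReal (Real.exp ((2*Δ*x - 2*Δ^2)/σ^2)) := if_neg (show ¬((1:Fin 2) = 0) by decide)
@[simp] lemma wden_one (x : ℝ) :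
    wden Δ σ (1, x) = ENNReal.ofReal (Real.exp ((2*Δ*x - 2*Δ^2)/(2*σ^2))) := if_neg (show ¬((1:Fin 2) = 0) by decide)

lemma measurable_gden : Measurable (gden Δ σ) :=
  Measurable.ite (measurable_fst (measurableSet_singleton 0)) measurable_const
    ((Real.measurable_exp.comp (by fun_prop)).ennreal_ofReal)

lemma measurable_wden : Measurable (wden Δ σ) :=
  Measurable.ite (measurable_fst (measurableSet_singleton 0)) measurable_const
    ((Real.measurable_exp.comp (by fun_prop)).ennreal_ofReal)

lemma wden_mul_self (hσ : σ ≠ 0) (p : Fin 2 × ℝ) :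
    wden Δ σ p * wden Δ σ p = gden Δ σ p := by
  rcases p with ⟨a, x⟩
  by_cases ha : a = 0
  · subst ha; simp
  · simp only [gden, wden, if_neg ha]
    rw [← ENNReal.ofReal_mul (Real.exp_nonneg _), ← Real.exp_add]
    congr 2
    field_simp
    ring

end BanditAux

/- Regret lower bound for Gaussian two-armed bandits: for the instances
`ν₁ = (N(Δ,σ₁²), N(0,σ₂²))` and `ν₂ = (N(Δ,σ₁²), N(2Δ,σ₂²))` with `σ₂ ≥ σ₁ > 0` and
`Δ = σ₂/√(2T)`, any policy `π` satisfies
`E_{πν₁}Reg(T) + E_{πν₂}Reg(T) ≥ σ₂√T/(4√2 e)`, hence for one of the instances the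
regret is at least `σ_sub √T/(8√2 e)` where `σ_sub` is the suboptimal arm's standard
deviation (`σ₂` for `ν₁`, `σ₁` for `ν₂`). -/
open BanditAux in
set_option maxHeartbeats 1000000 in
/-- Regret lower bound for Gaussian two-armed bandits: for the instances
`ν₁ = (N(Δ,σ₁²), N(0,σ₂²))` and `ν₂ = (N(Δ,σ₁²), N(2Δ,σ₂²))` with `σ₂ ≥ σ₁ > 0` and
`Δ = σ₂/√(2T)`, any policy `π` satisfies
`E_{πν₁}Reg(T) + E_{πν₂}Reg(T) ≥ σ₂√T/(4√2 e)`, hence for one of the instances the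
regret is at least `σ_sub √T/(8√2 e)` where `σ_sub` is the suboptimal arm's standard
deviation (`σ₂` for `ν₁`, `σ₁` for `ν₂`). -/
theorem gaussian_two_armed_lower_bound (σ1 σ2 : ℝ) (hσ1 : 0 < σ1) (hσ12 : σ1 ≤ σ2)
    (T : ℕ) (hT : 0 < T)
    (π : (n : ℕ) → (Fin n → Fin 2 × ℝ) → Measure (Fin 2))
    (hπm : ∀ n, Measurable (π n)) (hπp : ∀ n h, IsProbabilityMeasure (π n h))
    (Δ : ℝ) (hΔ : Δ = σ2 / Real.sqrt (2 * T))
    (ν₁ ν₂ : Fin 2 → Measure ℝ)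
    (hν₁ : ν₁ = fun a => if a = 0 then gaussianReal Δ (Real.toNNReal (σ1 ^ 2))
      else gaussianReal 0 (Real.toNNReal (σ2 ^ 2)))
    (hν₂ : ν₂ = fun a => if a = 0 then gaussianReal Δ (Real.toNNReal (σ1 ^ 2))
      else gaussianReal (2 * Δ) (Real.toNNReal (σ2 ^ 2))) :
    σ2 * Real.sqrt T / (4 * Real.sqrt 2 * Real.exp 1)
        ≤ (∫ h, regret ![Δ, 0] T h ∂(trajectory π ν₁ T))
          + (∫ h, regret ![Δ, 2 * Δ] T h ∂(trajectory π ν₂ T)) ∧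
    (σ2 * Real.sqrt T / (8 * Real.sqrt 2 * Real.exp 1)
        ≤ (∫ h, regret ![Δ, 0] T h ∂(trajectory π ν₁ T)) ∨
      σ1 * Real.sqrt T / (8 * Real.sqrt 2 * Real.exp 1)
        ≤ (∫ h, regret ![Δ, 2 * Δ] T h ∂(trajectory π ν₂ T))) := by
  have hσ2 : 0 < σ2 := lt_of_lt_of_le hσ1 hσ12
  have hTpos : (0:ℝ) < T := by exact_mod_cast hT
  have hΔpos : 0 < Δ := by rw [hΔ]; positivity
  have hΔsq : Δ^2 = σ2^2 / (2*T) := by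
    rw [hΔ, div_pow, Real.sq_sqrt (by positivity)]
  -- arm measures
  have hν₁0 : ν₁ 0 = gaussianReal Δ (Real.toNNReal (σ1 ^ 2)) := by
    rw [hν₁]; exact if_pos rfl
  have hν₁1 : ν₁ 1 = gaussianReal 0 (Real.toNNReal (σ2 ^ 2)) := by
    rw [hν₁]; exact if_neg (show ¬((1:Fin 2) = 0) by decide)
  have hν₂0 : ν₂ 0 = gaussianReal Δ (Real.toNNReal (σ1 ^ 2)) := by
    rw [hν₂]; exact if_pos rfl
  have hν₂1 : ν₂ 1 = gaussianReal (2 * Δ) (Real.toNNReal (σ2 ^ 2)) := by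
    rw [hν₂]; exact if_neg (show ¬((1:Fin 2) = 0) by decide)
  haveI hP1 : ∀ a, IsProbabilityMeasure (ν₁ a) := by
    intro a; rw [hν₁]; dsimp only; split <;> infer_instance
  haveI hP2 : ∀ a, IsProbabilityMeasure (ν₂ a) := by
    intro a; rw [hν₂]; dsimp only; split <;> infer_instance
  haveI probP : IsProbabilityMeasure (trajectory π ν₁ T) := traj_prob π ν₁ hπm hπp T
  haveI probQ : IsProbabilityMeasure (trajectory π ν₂ T) := traj_prob π ν₂ hπm hπp T
  set P := trajectory π ν₁ T with hP
  set Q := trajectory π ν₂ T with hQ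
  have hdens : ν₂ 1 = (ν₁ 1).withDensity (fun x => gden Δ σ2 (1, x)) := by
    simp only [gden_one]
    rw [hν₂1, hν₁1]
    exact gaussian_pdf_ratio hσ2
  have hc1 : ENNReal.ofReal (Real.exp (-Δ^2/(2*σ2^2))) ≤ 1 := by
    rw [← ENNReal.ofReal_one]
    apply ENNReal.ofReal_le_ofReal
    apply Real.exp_le_one_iff.2
    apply div_nonpos_of_nonpos_of_nonneg (neg_nonpos.2 (sq_nonneg _)) (by positivity)
  have hwint : ∫⁻ x, wden Δ σ2 (1, x) ∂(ν₁ 1)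
      = ENNReal.ofReal (Real.exp (-Δ^2/(2*σ2^2))) := by
    simp only [wden_one]
    rw [hν₁1]
    exact gaussian_half_exp hσ2
  set L : (Fin T → Fin 2 × ℝ) → ℝ≥0∞ := fun h => ∏ t, gden Δ σ2 (h t) with hL_def
  set W : (Fin T → Fin 2 × ℝ) → ℝ≥0∞ := fun h => ∏ t, wden Δ σ2 (h t) with hW_def
  have hLmeas : Measurable L := measurable_prodW _ measurable_gden
  have hWmeas : Measurable W := measurable_prodW _ measurable_wden
  have hQL : ∀ f : (Fin T → Fin 2 × ℝ) → ℝ≥0∞, Measurable f →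
      ∫⁻ h, f h ∂Q = ∫⁻ h, L h * f h ∂P :=
    likelihood π ν₁ ν₂ hπm measurable_gden (fun x => gden_zero x)
      (hν₂0.trans hν₁0.symm) hdens T
  have hA : ENNReal.ofReal (Real.exp (-(1:ℝ)/4)) ≤ ∫⁻ h, W h ∂P := by
    have h1 := hellinger_lb π ν₁ hπm hπp measurable_wden hc1 (fun x => wden_zero x) hwint T
    have h2 : (ENNReal.ofReal (Real.exp (-Δ^2/(2*σ2^2)))) ^ T
        = ENNReal.ofReal (Real.exp (-(1:ℝ)/4)) := by
      rw [← ENNReal.ofReal_pow (Real.exp_nonneg _), ← Real.exp_nat_mul]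
      congr 1
      rw [hΔsq]
      field_simp
      ring
    rw [h2] at h1
    exact h1
  -- counting function and the event s
  set cnt : (Fin T → Fin 2 × ℝ) → ℝ := fun h => ∑ t, if (h t).1 = 1 then (1:ℝ) else 0
    with hcnt_def
  have hcnt_meas : Measurable cnt := by
    apply Finset.measurable_sum
    intro t _
    exact (measurable_of_countable (fun a : Fin 2 => if a = 1 then (1:ℝ) else 0)).comp
      (measurable_fst.comp (measurable_pi_apply t))
  have hcnt_nonneg : ∀ h, 0 ≤ cnt h := fun h =>
    Finset.sum_nonneg fun t _ => by positivity
  have hcnt_le : ∀ h, cnt h ≤ T := by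
    intro h
    calc cnt h ≤ ∑ _t : Fin T, (1:ℝ) := Finset.sum_le_sum fun t _ => by split <;> norm_num
      _ = T := by simp
  set s : Set (Fin T → Fin 2 × ℝ) := {h | (T:ℝ)/2 ≤ cnt h} with hs_def
  have hs : MeasurableSet s := measurableSet_le measurable_const hcnt_meas
  -- change of measure identities
  have hQcompl : Q sᶜ = ∫⁻ h in sᶜ, L h ∂P := by
    have h1 := hQL (sᶜ.indicator 1) (measurable_one.indicator hs.compl)
    rw [lintegral_indicator_one hs.compl] at h1
    have h2 : ∀ h, L h * sᶜ.indicator 1 h = sᶜ.indicator L h := by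
      intro h
      by_cases hh : h ∈ sᶜ <;> simp [Set.indicator_apply, hh]
    simp_rw [h2] at h1
    rw [h1, lintegral_indicator hs.compl]
  have hQuniv : ∫⁻ h, L h ∂P = 1 := by
    have h1 := hQL (fun _ => 1) measurable_const
    simp only [mul_one, lintegral_one, measure_univ] at h1
    exact h1.symm
  -- Cauchy-Schwarz
  have hWW : ∀ h, W h * W h = L h := by
    intro h
    rw [hW_def, hL_def, ← Finset.prod_mul_distrib]
    exact Finset.prod_congr rfl fun t _ => wden_mul_self hσ2.ne' (h t)
  have hrpow_half : ∀ x : ℝ≥0∞, (x ^ (1/2 : ℝ)) ^ (2:ℝ) = x := by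
    intro x
    rw [← ENNReal.rpow_mul]
    norm_num
  have hsqrt_sq : ∀ x : ℝ≥0∞, (x * x) ^ (1/2 : ℝ) = x := by
    intro x
    rw [← pow_two, ← ENNReal.rpow_two, ← ENNReal.rpow_mul]
    norm_num
  have hW_eq : ∀ h, W h = (min 1 (L h)) ^ (1/2:ℝ) * (max 1 (L h)) ^ (1/2:ℝ) := by
    intro h
    rw [← ENNReal.mul_rpow_of_nonneg _ _ (by norm_num : (0:ℝ) ≤ 1/2), min_mul_max, one_mul,
      ← hWW h, hsqrt_sq]
  have hCS : (∫⁻ h, W h ∂P)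
      ≤ (∫⁻ h, min 1 (L h) ∂P) ^ (1/2:ℝ) * (∫⁻ h, max 1 (L h) ∂P) ^ (1/2:ℝ) := by
    have hmin_meas : Measurable fun h => min 1 (L h) := measurable_const.min hLmeas
    have hmax_meas : Measurable fun h => max 1 (L h) := measurable_const.max hLmeas
    have h2 := ENNReal.lintegral_mul_le_Lp_mul_Lq P
      Real.HolderConjugate.two_two
      (f := fun h => (min 1 (L h)) ^ (1/2:ℝ)) (g := fun h => (max 1 (L h)) ^ (1/2:ℝ))
      (hmin_meas.pow_const _).aemeasurable (hmax_meas.pow_const _).aemeasurable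
    simp only [Pi.mul_apply, hrpow_half] at h2
    calc (∫⁻ h, W h ∂P) = ∫⁻ h, (min 1 (L h)) ^ (1/2:ℝ) * (max 1 (L h)) ^ (1/2:ℝ) ∂P :=
          lintegral_congr fun h => hW_eq h
      _ ≤ _ := by
          refine le_trans h2 (le_of_eq ?_)
          norm_num
  have hmax_le : (∫⁻ h, max 1 (L h) ∂P) ≤ 2 := by
    calc (∫⁻ h, max 1 (L h) ∂P) ≤ ∫⁻ h, 1 + L h ∂P := by
          apply lintegral_mono
          intro h
          exact max_le (le_add_right le_rfl) (le_add_left le_rfl)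
      _ = 1 + ∫⁻ h, L h ∂P := by
          rw [lintegral_add_left measurable_const, lintegral_one, measure_univ]
      _ = 2 := by rw [hQuniv]; norm_num
  have hmin_le : (∫⁻ h, min 1 (L h) ∂P) ≤ P s + Q sᶜ := by
    rw [← lintegral_add_compl (fun h => min 1 (L h)) hs]
    apply add_le_add
    · calc (∫⁻ h in s, min 1 (L h) ∂P) ≤ ∫⁻ _h in s, 1 ∂P :=
            lintegral_mono fun h => min_le_left _ _
        _ = P s := setLIntegral_one s
    · rw [hQcompl]
      exact lintegral_mono fun h => min_le_right _ _
  -- Bretagnolle–Huber type bound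
  have hBH : ENNReal.ofReal (Real.exp (-(1:ℝ)/2) / 2) ≤ P s + Q sᶜ := by
    have hAA : ENNReal.ofReal (Real.exp (-(1:ℝ)/2))
        ≤ (∫⁻ h, min 1 (L h) ∂P) * 2 := by
      have e1 : ENNReal.ofReal (Real.exp (-(1:ℝ)/2))
          = ENNReal.ofReal (Real.exp (-(1:ℝ)/4)) * ENNReal.ofReal (Real.exp (-(1:ℝ)/4)) := by
        rw [← ENNReal.ofReal_mul (Real.exp_nonneg _), ← Real.exp_add]
        norm_num
      calc ENNReal.ofReal (Real.exp (-(1:ℝ)/2))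
          = ENNReal.ofReal (Real.exp (-(1:ℝ)/4)) * ENNReal.ofReal (Real.exp (-(1:ℝ)/4)) := e1
        _ ≤ (∫⁻ h, W h ∂P) * (∫⁻ h, W h ∂P) := mul_le_mul' hA hA
        _ ≤ ((∫⁻ h, min 1 (L h) ∂P) ^ (1/2:ℝ) * (∫⁻ h, max 1 (L h) ∂P) ^ (1/2:ℝ))
              * ((∫⁻ h, min 1 (L h) ∂P) ^ (1/2:ℝ) * (∫⁻ h, max 1 (L h) ∂P) ^ (1/2:ℝ)) :=
            mul_le_mul' hCS hCS
        _ = ((∫⁻ h, min 1 (L h) ∂P) ^ (1/2:ℝ) * (∫⁻ h, min 1 (L h) ∂P) ^ (1/2:ℝ))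
              * ((∫⁻ h, max 1 (L h) ∂P) ^ (1/2:ℝ) * (∫⁻ h, max 1 (L h) ∂P) ^ (1/2:ℝ)) := by
            ring
        _ = (∫⁻ h, min 1 (L h) ∂P) * (∫⁻ h, max 1 (L h) ∂P) := by
            rw [← ENNReal.rpow_add_of_nonneg _ _ (by norm_num) (by norm_num),
              ← ENNReal.rpow_add_of_nonneg _ _ (by norm_num) (by norm_num)]
            norm_num
        _ ≤ (∫⁻ h, min 1 (L h) ∂P) * 2 := mul_le_mul_right hmax_le _
    have h2 : ENNReal.ofReal (Real.exp (-(1:ℝ)/2)) / 2 ≤ ∫⁻ h, min 1 (L h) ∂P := by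
      rw [ENNReal.div_le_iff (by norm_num) (by norm_num)]
      exact hAA
    calc ENNReal.ofReal (Real.exp (-(1:ℝ)/2) / 2)
        = ENNReal.ofReal (Real.exp (-(1:ℝ)/2)) / 2 := by
          rw [ENNReal.ofReal_div_of_pos (by norm_num)]
          norm_num
      _ ≤ ∫⁻ h, min 1 (L h) ∂P := h2
      _ ≤ P s + Q sᶜ := hmin_le
  -- pass to real numbers
  have hreal : Real.exp (-(1:ℝ)/2) / 2 ≤ (P s).toReal + (Q sᶜ).toReal := by
    have hfin : P s + Q sᶜ ≠ ⊤ :=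
      ENNReal.add_ne_top.2 ⟨measure_ne_top _ _, measure_ne_top _ _⟩
    have h1 := ENNReal.toReal_mono hfin hBH
    rwa [ENNReal.toReal_ofReal (by positivity),
      ENNReal.toReal_add (measure_ne_top _ _) (measure_ne_top _ _)] at h1
  -- regret identities
  have hreg1_eq : ∀ h, regret ![Δ, 0] T h = Δ * cnt h := by
    intro h
    rw [regret, hcnt_def, Finset.mul_sum]
    apply Finset.sum_congr rfl
    intro t _
    have hmax : max (![Δ, 0] 0) (![Δ, 0] 1) = Δ := by
      simp [max_eq_left hΔpos.le]
    rw [hmax]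
    by_cases ha : (h t).1 = 1
    · rw [ha]; simp
    · have h0 : (h t).1 = 0 := by omega
      rw [h0, if_neg (show ¬((0:Fin 2) = 1) by decide)]
      simp
  have hreg2_eq : ∀ h, regret ![Δ, 2*Δ] T h = Δ * ((T:ℝ) - cnt h) := by
    intro h
    rw [regret, hcnt_def, mul_sub, Finset.mul_sum]
    have hmax : max (![Δ, 2*Δ] 0) (![Δ, 2*Δ] 1) = 2*Δ := by
      simp only [Matrix.cons_val_zero, Matrix.cons_val_one, Matrix.head_cons]
      exact max_eq_right (by linarith)
    have hsum : ∀ t : Fin T, max (![Δ, 2*Δ] 0) (![Δ, 2*Δ] 1) - ![Δ, 2*Δ] (h t).1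
        = Δ - Δ * (if (h t).1 = 1 then (1:ℝ) else 0) := by
      intro t
      rw [hmax]
      by_cases ha : (h t).1 = 1
      · rw [ha, if_pos rfl]
        simp only [Matrix.cons_val_one, Matrix.head_cons, Matrix.cons_val_zero]
        ring
      · have h0 : (h t).1 = 0 := by omega
        rw [h0, if_neg (show ¬((0:Fin 2) = 1) by decide)]
        simp only [Matrix.cons_val_zero]
        ring
    simp_rw [hsum]
    rw [Finset.sum_sub_distrib, Finset.sum_const, Finset.card_univ, Fintype.card_fin]
    ring
  -- integrability
  have hreg1_meas : Measurable (regret ![Δ, 0] T) := by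
    have he : (regret ![Δ, 0] T) = fun h => Δ * cnt h := funext hreg1_eq
    rw [he]; exact measurable_const.mul hcnt_meas
  have hreg2_meas : Measurable (regret ![Δ, 2*Δ] T) := by
    have he : (regret ![Δ, 2*Δ] T) = fun h => Δ * ((T:ℝ) - cnt h) := funext hreg2_eq
    rw [he]; exact measurable_const.mul (measurable_const.sub hcnt_meas)
  have hreg1_int : Integrable (regret ![Δ, 0] T) P := by
    refine Integrable.mono' (integrable_const (Δ * T)) hreg1_meas.aestronglyMeasurable
      (Filter.Eventually.of_forall fun h => ?_)
    rw [hreg1_eq h, Real.norm_eq_abs,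
      abs_of_nonneg (mul_nonneg hΔpos.le (hcnt_nonneg h))]
    exact mul_le_mul_of_nonneg_left (hcnt_le h) hΔpos.le
  have hreg2_int : Integrable (regret ![Δ, 2*Δ] T) Q := by
    refine Integrable.mono' (integrable_const (Δ * T)) hreg2_meas.aestronglyMeasurable
      (Filter.Eventually.of_forall fun h => ?_)
    rw [hreg2_eq h, Real.norm_eq_abs,
      abs_of_nonneg (mul_nonneg hΔpos.le (by linarith [hcnt_le h]))]
    exact mul_le_mul_of_nonneg_left (by linarith [hcnt_nonneg h]) hΔpos.le
  -- indicator lower bounds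
  have hind1 : ∀ h, s.indicator (fun _ => Δ * T / 2) h ≤ regret ![Δ, 0] T h := by
    intro h
    rw [hreg1_eq h]
    by_cases hh : h ∈ s
    · rw [Set.indicator_of_mem hh]
      have hch : (T:ℝ)/2 ≤ cnt h := hh
      calc Δ * T / 2 = Δ * ((T:ℝ)/2) := by ring
        _ ≤ Δ * cnt h := mul_le_mul_of_nonneg_left hch hΔpos.le
    · rw [Set.indicator_of_notMem hh]
      exact mul_nonneg hΔpos.le (hcnt_nonneg h)
  have hind2 : ∀ h, sᶜ.indicator (fun _ => Δ * T / 2) h ≤ regret ![Δ, 2*Δ] T h := by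
    intro h
    rw [hreg2_eq h]
    by_cases hh : h ∈ sᶜ
    · rw [Set.indicator_of_mem hh]
      have hch : ¬ ((T:ℝ)/2 ≤ cnt h) := hh
      push_neg at hch
      calc Δ * T / 2 = Δ * ((T:ℝ)/2) := by ring
        _ ≤ Δ * ((T:ℝ) - cnt h) := mul_le_mul_of_nonneg_left (by linarith) hΔpos.le
    · rw [Set.indicator_of_notMem hh]
      exact mul_nonneg hΔpos.le (by linarith [hcnt_le h])
  have hint1 : Δ * T / 2 * (P s).toReal ≤ ∫ h, regret ![Δ, 0] T h ∂P := by
    have h1 := integral_mono ((integrable_const _).indicator hs) hreg1_int hind1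
    rwa [integral_indicator_const _ hs, smul_eq_mul, mul_comm] at h1
  have hint2 : Δ * T / 2 * (Q sᶜ).toReal ≤ ∫ h, regret ![Δ, 2*Δ] T h ∂Q := by
    have h1 := integral_mono ((integrable_const _).indicator hs.compl) hreg2_int hind2
    rwa [integral_indicator_const _ hs.compl, smul_eq_mul, mul_comm] at h1
  -- final arithmetic
  have hsqrt2 : (0:ℝ) < Real.sqrt 2 := Real.sqrt_pos.2 (by norm_num)
  have hsqrtT : (0:ℝ) < Real.sqrt T := Real.sqrt_pos.2 hTpos
  have h22 : Real.sqrt 2 * Real.sqrt 2 = 2 := Real.mul_self_sqrt (by norm_num)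
  have hΔT : Δ * T = σ2 * Real.sqrt T / Real.sqrt 2 := by
    rw [hΔ, Real.sqrt_mul (by norm_num : (0:ℝ) ≤ 2),
      div_mul_eq_mul_div, div_eq_div_iff (by positivity) hsqrt2.ne']
    linear_combination (-σ2 * Real.sqrt 2) * Real.mul_self_sqrt hTpos.le
  have hee : (1:ℝ) ≤ Real.exp (-(1:ℝ)/2) * Real.exp 1 := by
    rw [← Real.exp_add]
    exact Real.one_le_exp (by norm_num)
  have hmain : σ2 * Real.sqrt T / (4 * Real.sqrt 2 * Real.exp 1)
      ≤ Δ * T / 2 * (Real.exp (-(1:ℝ)/2) / 2) := by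
    rw [hΔT, div_le_iff₀ (by positivity)]
    have hexp : σ2 * Real.sqrt T / Real.sqrt 2 / 2 * (Real.exp (-(1:ℝ)/2) / 2)
        * (4 * Real.sqrt 2 * Real.exp 1)
        = σ2 * Real.sqrt T * (Real.exp (-(1:ℝ)/2) * Real.exp 1) := by
      field_simp
      ring
    rw [hexp]
    exact le_mul_of_one_le_right (by positivity) hee
  have hsum : σ2 * Real.sqrt T / (4 * Real.sqrt 2 * Real.exp 1)
      ≤ (∫ h, regret ![Δ, 0] T h ∂P) + ∫ h, regret ![Δ, 2*Δ] T h ∂Q := by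
    have h1 : Δ * T / 2 * (Real.exp (-(1:ℝ)/2) / 2)
        ≤ Δ * T / 2 * ((P s).toReal + (Q sᶜ).toReal) :=
      mul_le_mul_of_nonneg_left hreal (by positivity)
    have h2 : Δ * T / 2 * ((P s).toReal + (Q sᶜ).toReal)
        ≤ (∫ h, regret ![Δ, 0] T h ∂P) + ∫ h, regret ![Δ, 2*Δ] T h ∂Q := by
      rw [mul_add]
      exact add_le_add hint1 hint2
    linarith [hmain]
  refine ⟨hsum, ?_⟩
  by_cases hcase : σ2 * Real.sqrt T / (8 * Real.sqrt 2 * Real.exp 1)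
      ≤ ∫ h, regret ![Δ, 0] T h ∂P
  · exact Or.inl hcase
  · right
    push_neg at hcase
    have hhalf : σ2 * Real.sqrt T / (8 * Real.sqrt 2 * Real.exp 1)
        = (σ2 * Real.sqrt T / (4 * Real.sqrt 2 * Real.exp 1)) / 2 := by
      ring
    have h4 : σ1 * Real.sqrt T / (8 * Real.sqrt 2 * Real.exp 1)
        ≤ σ2 * Real.sqrt T / (8 * Real.sqrt 2 * Real.exp 1) := by
      gcongr
    linarith [hsum]
end
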